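/- Let Γ be the random bipartite graph. Suppose G is a closed subgroup with Aut(Γ)* ≤ G ≤ S_{l,r}(Γ), and let X be the largest subset of {l,r} such that S_X(Γ)* ⊆ G. Then G ⊆ S_X(Γ)*, and hence G = S_X(Γ)*. -/

import Mathlib

/-! Preamble: bipartite graphs, the random bipartite graph, side-preserving
permutation groups, switches, switch groups, and related notions. -/

/-- A bipartite graph on a vertex type `V`: the sides `left` and `right`
partition `V`, both sides are nonempty, and `adj` (the relation `P₁`) only holds
from `left` to `right`.  The relation `P₂` is the complement of `adj` on
`left × right`. -/
structure BipartiteGraph (V : Type*) where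
  left : Set V
  right : Set V
  adj : V → V → Prop
  left_nonempty : left.Nonempty
  right_nonempty : right.Nonempty
  union_eq : left ∪ right = Set.univ
  disjoint_sides : Disjoint left right
  adj_dom : ∀ a b, adj a b → a ∈ left ∧ b ∈ right

/-- The two sides of a bipartite graph. -/
inductive BSide : Type
  | l : BSide
  | r : BSide
deriving DecidableEq

namespace BipartiteGraph

variable {V : Type*} (Γ : BipartiteGraph V)

/-- The side of the graph indexed by an element of `BSide`. -/
def side : BSide → Set V
  | BSide.l => Γ.left
  | BSide.r => Γ.right

/-- `Γ` is (isomorphic to) the random bipartite graph: it is countable, both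
sides are infinite, and it satisfies the extension properties `Θₙ` for all `n`. -/
structure IsRandom : Prop where
  countable : Countable V
  left_infinite : Γ.left.Infinite
  right_infinite : Γ.right.Infinite
  ext_left : ∀ X₁ X₂ : Finset V, ↑X₁ ⊆ Γ.left → ↑X₂ ⊆ Γ.left → Disjoint X₁ X₂ →
      ∃ v ∈ Γ.right, (∀ x ∈ X₁, Γ.adj x v) ∧ (∀ x ∈ X₂, ¬ Γ.adj x v)
  ext_right : ∀ X₁ X₂ : Finset V, ↑X₁ ⊆ Γ.right → ↑X₂ ⊆ Γ.right → Disjoint X₁ X₂ →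
      ∃ v ∈ Γ.left, (∀ x ∈ X₁, Γ.adj v x) ∧ (∀ x ∈ X₂, ¬ Γ.adj v x)

/-- `Sym_{l,r}(Γ)`: the group of permutations of `V` preserving both sides. -/
def symLR : Subgroup (Equiv.Perm V) where
  carrier := {g | (∀ v, g v ∈ Γ.left ↔ v ∈ Γ.left) ∧ (∀ v, g v ∈ Γ.right ↔ v ∈ Γ.right)}
  one_mem' := ⟨fun _ => Iff.rfl, fun _ => Iff.rfl⟩
  mul_mem' := by
    rintro a b ⟨hal, har⟩ ⟨hbl, hbr⟩
    exact ⟨fun v => (hal (b v)).trans (hbl v), fun v => (har (b v)).trans (hbr v)⟩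
  inv_mem' := by
    rintro a ⟨hal, har⟩
    refine ⟨fun v => ?_, fun v => ?_⟩
    · have h := hal (a⁻¹ v); rw [Equiv.Perm.coe_inv, Equiv.apply_symm_apply] at h; exact h.symm
    · have h := har (a⁻¹ v); rw [Equiv.Perm.coe_inv, Equiv.apply_symm_apply] at h; exact h.symm

/-- The automorphism group of `Γ`: side-preserving permutations preserving `adj`
(and hence both cross-types). -/
def autGroup : Subgroup (Equiv.Perm V) where
  carrier := {g | g ∈ Γ.symLR ∧ ∀ a b, Γ.adj a b ↔ Γ.adj (g a) (g b)}
  one_mem' := ⟨Γ.symLR.one_mem, fun _ _ => Iff.rfl⟩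
  mul_mem' := by
    rintro a b ⟨ha, ha2⟩ ⟨hb, hb2⟩
    exact ⟨mul_mem ha hb, fun x y => (hb2 x y).trans (ha2 (b x) (b y))⟩
  inv_mem' := by
    rintro a ⟨ha, ha2⟩
    refine ⟨inv_mem ha, fun x y => ?_⟩
    have h := ha2 (a⁻¹ x) (a⁻¹ y)
    rw [Equiv.Perm.coe_inv, Equiv.apply_symm_apply, Equiv.apply_symm_apply] at h
    exact h.symm

/-- A permutation `g` is a switch with respect to a set `A` if it preserves the
sides and, for every cross-edge `(a, b)`, the cross-type of `(a, b)` is preserved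
if and only if `|{a, b} ∩ A| ≠ 1`. -/
def IsSwitch (g : Equiv.Perm V) (A : Set V) : Prop :=
  g ∈ Γ.symLR ∧ ∀ a ∈ Γ.left, ∀ b ∈ Γ.right,
    ((Γ.adj a b ↔ Γ.adj (g a) (g b)) ↔ ({a, b} ∩ A : Set V).ncard ≠ 1)

/-- The restriction of a map `g` to a set `S` is a switch with respect to `A`:
the condition of `IsSwitch` holds for all cross-edges inside `S`. -/
def IsSwitchOn (g : V → V) (S : Set V) (A : Set V) : Prop :=
  ∀ a ∈ S ∩ Γ.left, ∀ b ∈ S ∩ Γ.right,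
    ((Γ.adj a b ↔ Γ.adj (g a) (g b)) ↔ ({a, b} ∩ A : Set V).ncard ≠ 1)

/-- The restriction of a map `g` to a set `S` is an isomorphism: `g` preserves
the cross-type of every cross-edge inside `S`. -/
def IsIsoOn (g : V → V) (S : Set V) : Prop :=
  ∀ a ∈ S ∩ Γ.left, ∀ b ∈ S ∩ Γ.right, (Γ.adj a b ↔ Γ.adj (g a) (g b))

end BipartiteGraph

/-- A subgroup of the full symmetric group is closed (in the topology of
pointwise convergence) iff it contains every permutation which agrees with some
member of the subgroup on each finite subset. -/
def IsClosedSubgroup {V : Type*} (G : Subgroup (Equiv.Perm V)) : Prop :=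
  ∀ g : Equiv.Perm V, (∀ F : Finset V, ∃ h ∈ G, ∀ x ∈ F, h x = g x) → g ∈ G

/-- The closed subgroup generated by a set of permutations: the intersection of
all closed subgroups containing the set. -/
def closedClosure {V : Type*} (S : Set (Equiv.Perm V)) : Subgroup (Equiv.Perm V) :=
  sInf {G : Subgroup (Equiv.Perm V) | IsClosedSubgroup G ∧ S ⊆ ↑G}

namespace BipartiteGraph

variable {V : Type*} (Γ : BipartiteGraph V)

/-- The switch group `S_X(Γ)`: the closed subgroup of `Sym_{l,r}(Γ)` generated
by `Aut(Γ)` together with all switches with respect to a single vertex `v ∈ R_i`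
for `i ∈ X`. -/
def switchGroup (X : Set BSide) : Subgroup (Equiv.Perm V) :=
  closedClosure ((Γ.autGroup : Set (Equiv.Perm V)) ∪
    {g | ∃ i ∈ X, ∃ v ∈ Γ.side i, Γ.IsSwitch g {v}})

/-- The group `S_X(Γ)* `: the closed subgroup generated by `S_X(Γ)` together with
a switch `ρ` with respect to the whole side `R_l`. -/
def switchGroupStar (X : Set BSide) : Subgroup (Equiv.Perm V) :=
  closedClosure ((Γ.switchGroup X : Set (Equiv.Perm V)) ∪ {g | Γ.IsSwitch g Γ.left})

/-- Membership in `Aut(Γ)*`, the group of side-preserving permutations which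
either preserve all cross-types on `R_l × R_r` or exchange all cross-types on
`R_l × R_r`. -/
def InAutStar (g : Equiv.Perm V) : Prop :=
  g ∈ Γ.symLR ∧
    ((∀ a ∈ Γ.left, ∀ b ∈ Γ.right, (Γ.adj a b ↔ Γ.adj (g a) (g b))) ∨
     (∀ a ∈ Γ.left, ∀ b ∈ Γ.right, (Γ.adj a b ↔ ¬ Γ.adj (g a) (g b))))

/-- The number of cross-edges of cross-type `P₁` inside the set `S`. -/
noncomputable def edgeCount (S : Set V) : ℕ :=
  {p : V × V | p.1 ∈ S ∧ p.2 ∈ S ∧ Γ.adj p.1 p.2}.ncard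

/-- `g` preserves the parity of cross-types on `S`: the number of `P₁`
cross-edges in `S` is even iff the number of `P₁` cross-edges in `g[S]` is even. -/
def PreservesParityOn (g : V → V) (S : Set V) : Prop :=
  Even (Γ.edgeCount S) ↔ Even (Γ.edgeCount (g '' S))

/-- An `(m × n)`-subgraph of `Γ`: a finite set of vertices with `m` vertices on
the left side and `n` vertices on the right side. -/
def IsMNSubgraph (S : Set V) (m n : ℕ) : Prop :=
  S.Finite ∧ (S ∩ Γ.left).ncard = m ∧ (S ∩ Γ.right).ncard = n

end BipartiteGraph

section Aux51
open Classical
namespace BipartiteGraph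

variable {V : Type*} {Γ : BipartiteGraph V}

lemma mem_side_total (Γ : BipartiteGraph V) (v : V) : v ∈ Γ.left ∨ v ∈ Γ.right := by
  have hv : v ∈ Γ.left ∪ Γ.right := by rw [Γ.union_eq]; trivial
  exact hv

lemma not_right_of_left {v : V} (h : v ∈ Γ.left) : v ∉ Γ.right :=
  fun h' => Set.disjoint_left.mp Γ.disjoint_sides h h'

lemma mem_right_iff_not_left (Γ : BipartiteGraph V) (v : V) :
    v ∈ Γ.right ↔ v ∉ Γ.left := by
  constructor
  · intro h h'
    exact not_right_of_left h' h
  · intro h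
    rcases mem_side_total Γ v with h' | h'
    · exact absurd h' h
    · exact h'

lemma cross_ne {a b : V} (ha : a ∈ Γ.left) (hb : b ∈ Γ.right) : a ≠ b :=
  fun h => not_right_of_left ha (h ▸ hb)

lemma mem_symLR {g : Equiv.Perm V} : g ∈ Γ.symLR ↔
    ((∀ v, g v ∈ Γ.left ↔ v ∈ Γ.left) ∧ (∀ v, g v ∈ Γ.right ↔ v ∈ Γ.right)) :=
  Iff.rfl

lemma symLR_left {g : Equiv.Perm V} (hg : g ∈ Γ.symLR) {v : V} (hv : v ∈ Γ.left) :
    g v ∈ Γ.left := (hg.1 v).mpr hv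

lemma symLR_right {g : Equiv.Perm V} (hg : g ∈ Γ.symLR) {v : V} (hv : v ∈ Γ.right) :
    g v ∈ Γ.right := (hg.2 v).mpr hv

/-- `g` is a switch whose set of "flipped" vertices is indicated by `fB`. -/
def CrossFlip (Γ : BipartiteGraph V) (g : V → V) (fB : V → Bool) : Prop :=
  ∀ a ∈ Γ.left, ∀ b ∈ Γ.right, ((Γ.adj a b ↔ Γ.adj (g a) (g b)) ↔ (fB a = fB b))

lemma ncard_cross_inter {a b : V} (ha : a ∈ Γ.left) (hb : b ∈ Γ.right) (A : Set V) :
    (({a, b} ∩ A : Set V).ncard ≠ 1) ↔ (a ∈ A ↔ b ∈ A) := by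
  have hab : a ≠ b := cross_ne ha hb
  by_cases hA : a ∈ A <;> by_cases hB : b ∈ A
  · have h : ({a, b} ∩ A : Set V) = {a, b} := by
      apply Set.inter_eq_left.mpr
      intro x hx
      rcases hx with h | h
      · exact h ▸ hA
      · exact h ▸ hB
    rw [h, Set.ncard_pair hab]
    simp [hA, hB]
  · have h : ({a, b} ∩ A : Set V) = {a} := by
      ext x
      constructor
      · rintro ⟨hx1, hx2⟩
        rcases hx1 with h | h
        · exact h
        · exact absurd (h ▸ hx2) hB
      · rintro rfl
        exact ⟨Or.inl rfl, hA⟩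
    rw [h, Set.ncard_singleton]
    simp [hA, hB]
  · have h : ({a, b} ∩ A : Set V) = {b} := by
      ext x
      constructor
      · rintro ⟨hx1, hx2⟩
        rcases hx1 with h | h
        · exact absurd (h ▸ hx2) hA
        · exact h
      · rintro rfl
        exact ⟨Or.inr rfl, hB⟩
    rw [h, Set.ncard_singleton]
    simp [hA, hB]
  · have h : ({a, b} ∩ A : Set V) = ∅ := by
      ext x
      simp only [Set.mem_inter_iff, Set.mem_insert_iff, Set.mem_singleton_iff,
        Set.mem_empty_iff_false, iff_false, not_and]
      rintro (rfl | rfl) h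
      · exact hA h
      · exact hB h
    rw [h, Set.ncard_empty]
    simp [hA, hB]

lemma isSwitch_iff {g : Equiv.Perm V} {A : Set V} :
    Γ.IsSwitch g A ↔ g ∈ Γ.symLR ∧ Γ.CrossFlip g (fun v => decide (v ∈ A)) := by
  unfold IsSwitch CrossFlip
  refine and_congr_right fun _ => ?_
  refine forall₂_congr fun a ha => forall₂_congr fun b hb => ?_
  rw [ncard_cross_inter ha hb, decide_eq_decide]

lemma crossFlip_comp {g₁ g₂ : V → V} {f₁ f₂ : V → Bool}
    (h₁ : Γ.CrossFlip g₁ f₁) (h₂ : Γ.CrossFlip g₂ f₂)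
    (hl : ∀ v ∈ Γ.left, g₂ v ∈ Γ.left) (hr : ∀ v ∈ Γ.right, g₂ v ∈ Γ.right) :
    Γ.CrossFlip (fun x => g₁ (g₂ x)) (fun x => xor (f₂ x) (f₁ (g₂ x))) := by
  intro a ha b hb
  have H2 := h₂ a ha b hb
  have H1 := h₁ (g₂ a) (hl a ha) (g₂ b) (hr b hb)
  cases hfa : f₂ a <;> cases hfb : f₂ b <;>
    cases hga : f₁ (g₂ a) <;> cases hgb : f₁ (g₂ b) <;>
    simp_all <;> tauto

lemma crossFlip_inv {g : Equiv.Perm V} {f : V → Bool}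
    (hg : g ∈ Γ.symLR) (h : Γ.CrossFlip g f) :
    Γ.CrossFlip (g⁻¹ : Equiv.Perm V) (fun x => f (g⁻¹ x)) := by
  intro a ha b hb
  have ha' : (g⁻¹ : Equiv.Perm V) a ∈ Γ.left := symLR_left (inv_mem hg) ha
  have hb' : (g⁻¹ : Equiv.Perm V) b ∈ Γ.right := symLR_right (inv_mem hg) hb
  have H := h _ ha' _ hb'
  rw [show ∀ x, g (g⁻¹ x) = x from fun x => by simp, show ∀ x, g (g⁻¹ x) = x from fun x => by simp] at H
  rw [← H]
  tauto

lemma crossFlip_congr {g : V → V} {f f' : V → Bool}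
    (h : Γ.CrossFlip g f) (hff' : ∀ x, f x = f' x) : Γ.CrossFlip g f' := by
  intro a ha b hb
  rw [← hff' a, ← hff' b]
  exact h a ha b hb

end BipartiteGraph
end Aux51
section Aux52
open Classical
namespace BipartiteGraph

variable {V : Type*} {Γ : BipartiteGraph V}

/-- Extension property on the left, avoiding a finite set. -/
lemma extL_avoid (hΓ : Γ.IsRandom) (S : Finset V) :
    ∀ X₁ X₂ : Finset V, ↑X₁ ⊆ Γ.left → ↑X₂ ⊆ Γ.left → Disjoint X₁ X₂ →
    ∃ v ∈ Γ.right, v ∉ S ∧ (∀ x ∈ X₁, Γ.adj x v) ∧ (∀ x ∈ X₂, ¬ Γ.adj x v) := by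
  induction S using Finset.induction_on with
  | empty =>
      intro X₁ X₂ h1 h2 hd
      obtain ⟨v, hv, hp, hn⟩ := hΓ.ext_left X₁ X₂ h1 h2 hd
      exact ⟨v, hv, by simp, hp, hn⟩
  | @insert s S hs IH =>
      intro X₁ X₂ h1 h2 hd
      obtain ⟨x, hxl, hx⟩ := hΓ.left_infinite.exists_notMem_finset (X₁ ∪ X₂)
      simp only [Finset.mem_union, not_or] at hx
      by_cases hadj : Γ.adj x s
      · obtain ⟨v, hv, hvS, hp, hn⟩ := IH X₁ (insert x X₂) h1
          (by rw [Finset.coe_insert]; exact Set.insert_subset hxl h2)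
          (by rw [Finset.disjoint_insert_right]; exact ⟨hx.1, hd⟩)
        refine ⟨v, hv, ?_, hp, fun y hy => hn y (Finset.mem_insert_of_mem hy)⟩
        intro hvmem
        rcases Finset.mem_insert.mp hvmem with rfl | hvmem
        · exact hn x (Finset.mem_insert_self _ _) hadj
        · exact hvS hvmem
      · obtain ⟨v, hv, hvS, hp, hn⟩ := IH (insert x X₁) X₂
          (by rw [Finset.coe_insert]; exact Set.insert_subset hxl h1)
          h2
          (by rw [Finset.disjoint_insert_left]; exact ⟨hx.2, hd⟩)
        refine ⟨v, hv, ?_, fun y hy => hp y (Finset.mem_insert_of_mem hy), hn⟩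
        intro hvmem
        rcases Finset.mem_insert.mp hvmem with rfl | hvmem
        · exact hadj (hp x (Finset.mem_insert_self _ _))
        · exact hvS hvmem

/-- Extension property on the right, avoiding a finite set. -/
lemma extR_avoid (hΓ : Γ.IsRandom) (S : Finset V) :
    ∀ X₁ X₂ : Finset V, ↑X₁ ⊆ Γ.right → ↑X₂ ⊆ Γ.right → Disjoint X₁ X₂ →
    ∃ v ∈ Γ.left, v ∉ S ∧ (∀ x ∈ X₁, Γ.adj v x) ∧ (∀ x ∈ X₂, ¬ Γ.adj v x) := by
  induction S using Finset.induction_on with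
  | empty =>
      intro X₁ X₂ h1 h2 hd
      obtain ⟨v, hv, hp, hn⟩ := hΓ.ext_right X₁ X₂ h1 h2 hd
      exact ⟨v, hv, by simp, hp, hn⟩
  | @insert s S hs IH =>
      intro X₁ X₂ h1 h2 hd
      obtain ⟨x, hxl, hx⟩ := hΓ.right_infinite.exists_notMem_finset (X₁ ∪ X₂)
      simp only [Finset.mem_union, not_or] at hx
      by_cases hadj : Γ.adj s x
      · obtain ⟨v, hv, hvS, hp, hn⟩ := IH X₁ (insert x X₂) h1
          (by rw [Finset.coe_insert]; exact Set.insert_subset hxl h2)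
          (by rw [Finset.disjoint_insert_right]; exact ⟨hx.1, hd⟩)
        refine ⟨v, hv, ?_, hp, fun y hy => hn y (Finset.mem_insert_of_mem hy)⟩
        intro hvmem
        rcases Finset.mem_insert.mp hvmem with rfl | hvmem
        · exact hn x (Finset.mem_insert_self _ _) hadj
        · exact hvS hvmem
      · obtain ⟨v, hv, hvS, hp, hn⟩ := IH (insert x X₁) X₂
          (by rw [Finset.coe_insert]; exact Set.insert_subset hxl h1)
          h2
          (by rw [Finset.disjoint_insert_left]; exact ⟨hx.2, hd⟩)
        refine ⟨v, hv, ?_, fun y hy => hp y (Finset.mem_insert_of_mem hy), hn⟩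
        intro hvmem
        rcases Finset.mem_insert.mp hvmem with rfl | hvmem
        · exact hadj (hp x (Finset.mem_insert_self _ _))
        · exact hvS hvmem

/-- The graph `Γ` switched along the (indicator of the) set with indicator
function `fB`, restricted to cross-pairs `left × right`. -/
def adjB (Γ : BipartiteGraph V) (fB : V → Bool) (a b : V) : Prop :=
  Γ.adj a b ↔ (fB a = fB b)

end BipartiteGraph
end Aux52
section Aux53
open Classical
namespace BipartiteGraph

variable {V : Type*} {Γ : BipartiteGraph V}

lemma extL_avoid_flip (hΓ : Γ.IsRandom) {fB : V → Bool} {c : Bool} {T : Finset V}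
    (hT : ∀ v ∈ Γ.right, v ∉ T → fB v = c) (S : Finset V) :
    ∀ X₁ X₂ : Finset V, ↑X₁ ⊆ Γ.left → ↑X₂ ⊆ Γ.left → Disjoint X₁ X₂ →
    ∃ v ∈ Γ.right, v ∉ S ∧ (∀ x ∈ X₁, Γ.adjB fB x v) ∧ (∀ x ∈ X₂, ¬ Γ.adjB fB x v) := by
  intro X₁ X₂ h1 h2 hd
  classical
  set Y₁ : Finset V := X₁.filter (fun x => fB x = c) ∪ X₂.filter (fun x => fB x ≠ c) with hY₁
  set Y₂ : Finset V := X₁.filter (fun x => fB x ≠ c) ∪ X₂.filter (fun x => fB x = c) with hY₂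
  have hY₁l : ↑Y₁ ⊆ Γ.left := by
    intro y hy
    simp only [hY₁, Finset.coe_union, Set.mem_union, Finset.coe_filter, Set.mem_setOf_eq] at hy
    rcases hy with ⟨hy, _⟩ | ⟨hy, _⟩
    · exact h1 hy
    · exact h2 hy
  have hY₂l : ↑Y₂ ⊆ Γ.left := by
    intro y hy
    simp only [hY₂, Finset.coe_union, Set.mem_union, Finset.coe_filter, Set.mem_setOf_eq] at hy
    rcases hy with ⟨hy, _⟩ | ⟨hy, _⟩
    · exact h1 hy
    · exact h2 hy
  have hYd : Disjoint Y₁ Y₂ := by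
    rw [Finset.disjoint_left]
    intro y hy1 hy2
    simp only [hY₁, hY₂, Finset.mem_union, Finset.mem_filter] at hy1 hy2
    rcases hy1 with ⟨hy1, e1⟩ | ⟨hy1, e1⟩ <;> rcases hy2 with ⟨hy2, e2⟩ | ⟨hy2, e2⟩
    · exact e2 e1
    · exact Finset.disjoint_left.mp hd hy1 hy2
    · exact Finset.disjoint_left.mp hd hy2 hy1
    · exact e1 e2
  obtain ⟨v, hv, hvS, hp, hn⟩ := extL_avoid hΓ (S ∪ T) Y₁ Y₂ hY₁l hY₂l hYd
  have hvT : v ∉ T := fun h => hvS (Finset.mem_union_right _ h)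
  have hfv : fB v = c := hT v hv hvT
  refine ⟨v, hv, fun h => hvS (Finset.mem_union_left _ h), ?_, ?_⟩
  · intro x hx
    unfold adjB
    rw [hfv]
    by_cases hfx : fB x = c
    · have : Γ.adj x v := hp x (by simp [hY₁, Finset.mem_union, Finset.mem_filter, hx, hfx])
      simp [this, hfx]
    · have : ¬ Γ.adj x v := hn x (by simp [hY₂, Finset.mem_union, Finset.mem_filter, hx, hfx])
      simp [this, hfx]
  · intro x hx
    unfold adjB
    rw [hfv]
    by_cases hfx : fB x = c
    · have : ¬ Γ.adj x v := hn x (by simp [hY₂, Finset.mem_union, Finset.mem_filter, hx, hfx])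
      simp [this, hfx]
    · have : Γ.adj x v := hp x (by simp [hY₁, Finset.mem_union, Finset.mem_filter, hx, hfx])
      simp [this, hfx]

lemma extR_avoid_flip (hΓ : Γ.IsRandom) {fB : V → Bool} {c : Bool} {T : Finset V}
    (hT : ∀ v ∈ Γ.left, v ∉ T → fB v = c) (S : Finset V) :
    ∀ X₁ X₂ : Finset V, ↑X₁ ⊆ Γ.right → ↑X₂ ⊆ Γ.right → Disjoint X₁ X₂ →
    ∃ v ∈ Γ.left, v ∉ S ∧ (∀ x ∈ X₁, Γ.adjB fB v x) ∧ (∀ x ∈ X₂, ¬ Γ.adjB fB v x) := by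
  intro X₁ X₂ h1 h2 hd
  classical
  set Y₁ : Finset V := X₁.filter (fun x => fB x = c) ∪ X₂.filter (fun x => fB x ≠ c) with hY₁
  set Y₂ : Finset V := X₁.filter (fun x => fB x ≠ c) ∪ X₂.filter (fun x => fB x = c) with hY₂
  have hY₁l : ↑Y₁ ⊆ Γ.right := by
    intro y hy
    simp only [hY₁, Finset.coe_union, Set.mem_union, Finset.coe_filter, Set.mem_setOf_eq] at hy
    rcases hy with ⟨hy, _⟩ | ⟨hy, _⟩
    · exact h1 hy
    · exact h2 hy
  have hY₂l : ↑Y₂ ⊆ Γ.right := by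
    intro y hy
    simp only [hY₂, Finset.coe_union, Set.mem_union, Finset.coe_filter, Set.mem_setOf_eq] at hy
    rcases hy with ⟨hy, _⟩ | ⟨hy, _⟩
    · exact h1 hy
    · exact h2 hy
  have hYd : Disjoint Y₁ Y₂ := by
    rw [Finset.disjoint_left]
    intro y hy1 hy2
    simp only [hY₁, hY₂, Finset.mem_union, Finset.mem_filter] at hy1 hy2
    rcases hy1 with ⟨hy1, e1⟩ | ⟨hy1, e1⟩ <;> rcases hy2 with ⟨hy2, e2⟩ | ⟨hy2, e2⟩
    · exact e2 e1
    · exact Finset.disjoint_left.mp hd hy1 hy2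
    · exact Finset.disjoint_left.mp hd hy2 hy1
    · exact e1 e2
  obtain ⟨v, hv, hvS, hp, hn⟩ := extR_avoid hΓ (S ∪ T) Y₁ Y₂ hY₁l hY₂l hYd
  have hvT : v ∉ T := fun h => hvS (Finset.mem_union_right _ h)
  have hfv : fB v = c := hT v hv hvT
  refine ⟨v, hv, fun h => hvS (Finset.mem_union_left _ h), ?_, ?_⟩
  · intro x hx
    unfold adjB
    rw [hfv]
    by_cases hfx : fB x = c
    · have : Γ.adj v x := hp x (by simp [hY₁, Finset.mem_union, Finset.mem_filter, hx, hfx])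
      simp [this, hfx, Eq.comm (a := c)]
    · have : ¬ Γ.adj v x := hn x (by simp [hY₂, Finset.mem_union, Finset.mem_filter, hx, hfx])
      simp [this, hfx, Eq.comm (a := c)]
  · intro x hx
    unfold adjB
    rw [hfv]
    by_cases hfx : fB x = c
    · have : ¬ Γ.adj v x := hn x (by simp [hY₂, Finset.mem_union, Finset.mem_filter, hx, hfx])
      simp [this, hfx, Eq.comm (a := c)]
    · have : Γ.adj v x := hp x (by simp [hY₁, Finset.mem_union, Finset.mem_filter, hx, hfx])
      simp [this, hfx, Eq.comm (a := c)]

end BipartiteGraph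
end Aux53
section Aux54
open Classical
namespace BipartiteGraph

variable {V : Type*} {Γ : BipartiteGraph V}

/-- A finite partial isomorphism from the graph `Γ` switched along `fB`
to the graph `Γ`. -/
structure PIso (Γ : BipartiteGraph V) (fB : V → Bool) where
  s : Finset (V × V)
  inj1 : ∀ p ∈ s, ∀ q ∈ s, p.1 = q.1 → p = q
  inj2 : ∀ p ∈ s, ∀ q ∈ s, p.2 = q.2 → p = q
  side : ∀ p ∈ s, (p.1 ∈ Γ.left ↔ p.2 ∈ Γ.left)
  cross : ∀ p ∈ s, ∀ q ∈ s, p.1 ∈ Γ.left → q.1 ∈ Γ.right →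
    (Γ.adjB fB p.1 q.1 ↔ Γ.adj p.2 q.2)

lemma PIso.side_right {fB : V → Bool} (P : PIso Γ fB) (p : V × V) (hp : p ∈ P.s) :
    (p.1 ∈ Γ.right ↔ p.2 ∈ Γ.right) := by
  rw [mem_right_iff_not_left, mem_right_iff_not_left, not_iff_not]
  exact P.side p hp

lemma PIso.forth (hΓ : Γ.IsRandom) {fB : V → Bool} (P : PIso Γ fB) (v : V) :
    ∃ Q : PIso Γ fB, P.s ⊆ Q.s ∧ ∃ w, (v, w) ∈ Q.s := by
  classical
  by_cases hv : ∃ w, (v, w) ∈ P.s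
  · exact ⟨P, subset_rfl, hv⟩
  rcases mem_side_total Γ v with hvl | hvr
  · set X₁ := (P.s.filter (fun q => q.1 ∈ Γ.right ∧ Γ.adjB fB v q.1)).image Prod.snd with hX₁
    set X₂ := (P.s.filter (fun q => q.1 ∈ Γ.right ∧ ¬ Γ.adjB fB v q.1)).image Prod.snd with hX₂
    have hX₁r : ↑X₁ ⊆ Γ.right := by
      intro y hy
      simp only [hX₁, Finset.coe_image, Set.mem_image, Finset.mem_coe, Finset.mem_filter] at hy
      obtain ⟨q, ⟨hq, hq1, _⟩, rfl⟩ := hy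
      exact (P.side_right q hq).mp hq1
    have hX₂r : ↑X₂ ⊆ Γ.right := by
      intro y hy
      simp only [hX₂, Finset.coe_image, Set.mem_image, Finset.mem_coe, Finset.mem_filter] at hy
      obtain ⟨q, ⟨hq, hq1, _⟩, rfl⟩ := hy
      exact (P.side_right q hq).mp hq1
    have hdis : Disjoint X₁ X₂ := by
      rw [Finset.disjoint_left]
      intro y h1 h2
      simp only [hX₁, hX₂, Finset.mem_image, Finset.mem_filter] at h1 h2
      obtain ⟨q, ⟨hq, hq1, hq2⟩, hqy⟩ := h1
      obtain ⟨q', ⟨hq', hq1', hq2'⟩, hqy'⟩ := h2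
      have heq := P.inj2 q hq q' hq' (by rw [hqy, hqy'])
      rw [heq] at hq2
      exact hq2' hq2
    obtain ⟨w, hwl, hwS, hadj, hnadj⟩ :=
      extR_avoid hΓ (P.s.image Prod.snd) X₁ X₂ hX₁r hX₂r hdis
    refine ⟨⟨insert (v, w) P.s, ?_, ?_, ?_, ?_⟩, Finset.subset_insert _ _, w,
      Finset.mem_insert_self _ _⟩
    · intro p hp q hq hpq
      rcases Finset.mem_insert.mp hp with rfl | hp <;>
        rcases Finset.mem_insert.mp hq with rfl | hq
      · rfl
      · exfalso
        have hq1 : v = q.1 := hpq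
        exact hv ⟨q.2, by rw [hq1, Prod.mk.eta]; exact hq⟩
      · exfalso
        have hq1 : v = p.1 := hpq.symm
        exact hv ⟨p.2, by rw [hq1, Prod.mk.eta]; exact hp⟩
      · exact P.inj1 p hp q hq hpq
    · intro p hp q hq hpq
      rcases Finset.mem_insert.mp hp with rfl | hp <;>
        rcases Finset.mem_insert.mp hq with rfl | hq
      · rfl
      · exfalso
        have hq1 : w = q.2 := hpq
        exact hwS (Finset.mem_image.mpr ⟨q, hq, hq1.symm⟩)
      · exfalso
        have hq1 : w = p.2 := hpq.symm
        exact hwS (Finset.mem_image.mpr ⟨p, hp, hq1.symm⟩)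
      · exact P.inj2 p hp q hq hpq
    · intro p hp
      rcases Finset.mem_insert.mp hp with rfl | hp
      · exact iff_of_true hvl hwl
      · exact P.side p hp
    · intro p hp q hq hpl hqr
      rcases Finset.mem_insert.mp hp with rfl | hp <;>
        rcases Finset.mem_insert.mp hq with rfl | hq
      · exact absurd hqr (not_right_of_left hvl)
      · show Γ.adjB fB v q.1 ↔ Γ.adj w q.2
        constructor
        · intro hab
          exact hadj q.2 (Finset.mem_image.mpr ⟨q, Finset.mem_filter.mpr ⟨hq, hqr, hab⟩, rfl⟩)
        · intro hab
          by_contra hno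
          exact hnadj q.2 (Finset.mem_image.mpr ⟨q, Finset.mem_filter.mpr ⟨hq, hqr, hno⟩, rfl⟩) hab
      · exact absurd hqr (not_right_of_left hvl)
      · exact P.cross p hp q hq hpl hqr
  · set X₁ := (P.s.filter (fun q => q.1 ∈ Γ.left ∧ Γ.adjB fB q.1 v)).image Prod.snd with hX₁
    set X₂ := (P.s.filter (fun q => q.1 ∈ Γ.left ∧ ¬ Γ.adjB fB q.1 v)).image Prod.snd with hX₂
    have hX₁r : ↑X₁ ⊆ Γ.left := by
      intro y hy
      simp only [hX₁, Finset.coe_image, Set.mem_image, Finset.mem_coe, Finset.mem_filter] at hy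
      obtain ⟨q, ⟨hq, hq1, _⟩, rfl⟩ := hy
      exact (P.side q hq).mp hq1
    have hX₂r : ↑X₂ ⊆ Γ.left := by
      intro y hy
      simp only [hX₂, Finset.coe_image, Set.mem_image, Finset.mem_coe, Finset.mem_filter] at hy
      obtain ⟨q, ⟨hq, hq1, _⟩, rfl⟩ := hy
      exact (P.side q hq).mp hq1
    have hdis : Disjoint X₁ X₂ := by
      rw [Finset.disjoint_left]
      intro y h1 h2
      simp only [hX₁, hX₂, Finset.mem_image, Finset.mem_filter] at h1 h2
      obtain ⟨q, ⟨hq, hq1, hq2⟩, hqy⟩ := h1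
      obtain ⟨q', ⟨hq', hq1', hq2'⟩, hqy'⟩ := h2
      have heq := P.inj2 q hq q' hq' (by rw [hqy, hqy'])
      rw [heq] at hq2
      exact hq2' hq2
    obtain ⟨w, hwl, hwS, hadj, hnadj⟩ :=
      extL_avoid hΓ (P.s.image Prod.snd) X₁ X₂ hX₁r hX₂r hdis
    refine ⟨⟨insert (v, w) P.s, ?_, ?_, ?_, ?_⟩, Finset.subset_insert _ _, w,
      Finset.mem_insert_self _ _⟩
    · intro p hp q hq hpq
      rcases Finset.mem_insert.mp hp with rfl | hp <;>
        rcases Finset.mem_insert.mp hq with rfl | hq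
      · rfl
      · exfalso
        have hq1 : v = q.1 := hpq
        exact hv ⟨q.2, by rw [hq1, Prod.mk.eta]; exact hq⟩
      · exfalso
        have hq1 : v = p.1 := hpq.symm
        exact hv ⟨p.2, by rw [hq1, Prod.mk.eta]; exact hp⟩
      · exact P.inj1 p hp q hq hpq
    · intro p hp q hq hpq
      rcases Finset.mem_insert.mp hp with rfl | hp <;>
        rcases Finset.mem_insert.mp hq with rfl | hq
      · rfl
      · exfalso
        have hq1 : w = q.2 := hpq
        exact hwS (Finset.mem_image.mpr ⟨q, hq, hq1.symm⟩)
      · exfalso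
        have hq1 : w = p.2 := hpq.symm
        exact hwS (Finset.mem_image.mpr ⟨p, hp, hq1.symm⟩)
      · exact P.inj2 p hp q hq hpq
    · intro p hp
      rcases Finset.mem_insert.mp hp with rfl | hp
      · exact iff_of_false (not_right_of_left · hvr) (not_right_of_left · hwl)
      · exact P.side p hp
    · intro p hp q hq hpl hqr
      rcases Finset.mem_insert.mp hp with rfl | hp <;>
        rcases Finset.mem_insert.mp hq with rfl | hq
      · exact absurd hvr (not_right_of_left hpl)
      · exact absurd hvr (not_right_of_left hpl)
      · show Γ.adjB fB p.1 v ↔ Γ.adj p.2 w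
        constructor
        · intro hab
          exact hadj p.2 (Finset.mem_image.mpr ⟨p, Finset.mem_filter.mpr ⟨hp, hpl, hab⟩, rfl⟩)
        · intro hab
          by_contra hno
          exact hnadj p.2 (Finset.mem_image.mpr ⟨p, Finset.mem_filter.mpr ⟨hp, hpl, hno⟩, rfl⟩) hab
      · exact P.cross p hp q hq hpl hqr

lemma PIso.back (hΓ : Γ.IsRandom) {fB : V → Bool} {cl cr : Bool} {Tl Tr : Finset V}
    (hcl : ∀ v ∈ Γ.left, v ∉ Tl → fB v = cl) (hcr : ∀ v ∈ Γ.right, v ∉ Tr → fB v = cr)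
    (P : PIso Γ fB) (v : V) :
    ∃ Q : PIso Γ fB, P.s ⊆ Q.s ∧ ∃ w, (w, v) ∈ Q.s := by
  classical
  by_cases hv : ∃ w, (w, v) ∈ P.s
  · exact ⟨P, subset_rfl, hv⟩
  rcases mem_side_total Γ v with hvl | hvr
  · set X₁ := (P.s.filter (fun q => q.1 ∈ Γ.right ∧ Γ.adj v q.2)).image Prod.fst with hX₁
    set X₂ := (P.s.filter (fun q => q.1 ∈ Γ.right ∧ ¬ Γ.adj v q.2)).image Prod.fst with hX₂
    have hX₁r : ↑X₁ ⊆ Γ.right := by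
      intro y hy
      simp only [hX₁, Finset.coe_image, Set.mem_image, Finset.mem_coe, Finset.mem_filter] at hy
      obtain ⟨q, ⟨hq, hq1, _⟩, rfl⟩ := hy
      exact hq1
    have hX₂r : ↑X₂ ⊆ Γ.right := by
      intro y hy
      simp only [hX₂, Finset.coe_image, Set.mem_image, Finset.mem_coe, Finset.mem_filter] at hy
      obtain ⟨q, ⟨hq, hq1, _⟩, rfl⟩ := hy
      exact hq1
    have hdis : Disjoint X₁ X₂ := by
      rw [Finset.disjoint_left]
      intro y h1 h2
      simp only [hX₁, hX₂, Finset.mem_image, Finset.mem_filter] at h1 h2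
      obtain ⟨q, ⟨hq, hq1, hq2⟩, hqy⟩ := h1
      obtain ⟨q', ⟨hq', hq1', hq2'⟩, hqy'⟩ := h2
      have heq := P.inj1 q hq q' hq' (by rw [hqy, hqy'])
      rw [heq] at hq2
      exact hq2' hq2
    obtain ⟨w, hwl, hwS, hadj, hnadj⟩ :=
      extR_avoid_flip hΓ hcl (P.s.image Prod.fst) X₁ X₂ hX₁r hX₂r hdis
    refine ⟨⟨insert (w, v) P.s, ?_, ?_, ?_, ?_⟩, Finset.subset_insert _ _, w,
      Finset.mem_insert_self _ _⟩
    · intro p hp q hq hpq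
      rcases Finset.mem_insert.mp hp with rfl | hp <;>
        rcases Finset.mem_insert.mp hq with rfl | hq
      · rfl
      · exfalso
        have hq1 : w = q.1 := hpq
        exact hwS (Finset.mem_image.mpr ⟨q, hq, hq1.symm⟩)
      · exfalso
        have hq1 : w = p.1 := hpq.symm
        exact hwS (Finset.mem_image.mpr ⟨p, hp, hq1.symm⟩)
      · exact P.inj1 p hp q hq hpq
    · intro p hp q hq hpq
      rcases Finset.mem_insert.mp hp with rfl | hp <;>
        rcases Finset.mem_insert.mp hq with rfl | hq
      · rfl
      · exfalso
        have hq1 : v = q.2 := hpq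
        exact hv ⟨q.1, by rw [hq1, Prod.mk.eta]; exact hq⟩
      · exfalso
        have hq1 : v = p.2 := hpq.symm
        exact hv ⟨p.1, by rw [hq1, Prod.mk.eta]; exact hp⟩
      · exact P.inj2 p hp q hq hpq
    · intro p hp
      rcases Finset.mem_insert.mp hp with rfl | hp
      · exact iff_of_true hwl hvl
      · exact P.side p hp
    · intro p hp q hq hpl hqr
      rcases Finset.mem_insert.mp hp with rfl | hp <;>
        rcases Finset.mem_insert.mp hq with rfl | hq
      · exact absurd hqr (not_right_of_left hwl)
      · show Γ.adjB fB w q.1 ↔ Γ.adj v q.2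
        constructor
        · intro hab
          by_contra hno
          exact hnadj q.1 (Finset.mem_image.mpr ⟨q, Finset.mem_filter.mpr ⟨hq, hqr, hno⟩, rfl⟩) hab
        · intro hab
          exact hadj q.1 (Finset.mem_image.mpr ⟨q, Finset.mem_filter.mpr ⟨hq, hqr, hab⟩, rfl⟩)
      · exact absurd hqr (not_right_of_left hwl)
      · exact P.cross p hp q hq hpl hqr
  · set X₁ := (P.s.filter (fun q => q.1 ∈ Γ.left ∧ Γ.adj q.2 v)).image Prod.fst with hX₁
    set X₂ := (P.s.filter (fun q => q.1 ∈ Γ.left ∧ ¬ Γ.adj q.2 v)).image Prod.fst with hX₂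
    have hX₁r : ↑X₁ ⊆ Γ.left := by
      intro y hy
      simp only [hX₁, Finset.coe_image, Set.mem_image, Finset.mem_coe, Finset.mem_filter] at hy
      obtain ⟨q, ⟨hq, hq1, _⟩, rfl⟩ := hy
      exact hq1
    have hX₂r : ↑X₂ ⊆ Γ.left := by
      intro y hy
      simp only [hX₂, Finset.coe_image, Set.mem_image, Finset.mem_coe, Finset.mem_filter] at hy
      obtain ⟨q, ⟨hq, hq1, _⟩, rfl⟩ := hy
      exact hq1
    have hdis : Disjoint X₁ X₂ := by
      rw [Finset.disjoint_left]
      intro y h1 h2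
      simp only [hX₁, hX₂, Finset.mem_image, Finset.mem_filter] at h1 h2
      obtain ⟨q, ⟨hq, hq1, hq2⟩, hqy⟩ := h1
      obtain ⟨q', ⟨hq', hq1', hq2'⟩, hqy'⟩ := h2
      have heq := P.inj1 q hq q' hq' (by rw [hqy, hqy'])
      rw [heq] at hq2
      exact hq2' hq2
    obtain ⟨w, hwl, hwS, hadj, hnadj⟩ :=
      extL_avoid_flip hΓ hcr (P.s.image Prod.fst) X₁ X₂ hX₁r hX₂r hdis
    refine ⟨⟨insert (w, v) P.s, ?_, ?_, ?_, ?_⟩, Finset.subset_insert _ _, w,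
      Finset.mem_insert_self _ _⟩
    · intro p hp q hq hpq
      rcases Finset.mem_insert.mp hp with rfl | hp <;>
        rcases Finset.mem_insert.mp hq with rfl | hq
      · rfl
      · exfalso
        have hq1 : w = q.1 := hpq
        exact hwS (Finset.mem_image.mpr ⟨q, hq, hq1.symm⟩)
      · exfalso
        have hq1 : w = p.1 := hpq.symm
        exact hwS (Finset.mem_image.mpr ⟨p, hp, hq1.symm⟩)
      · exact P.inj1 p hp q hq hpq
    · intro p hp q hq hpq
      rcases Finset.mem_insert.mp hp with rfl | hp <;>
        rcases Finset.mem_insert.mp hq with rfl | hq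
      · rfl
      · exfalso
        have hq1 : v = q.2 := hpq
        exact hv ⟨q.1, by rw [hq1, Prod.mk.eta]; exact hq⟩
      · exfalso
        have hq1 : v = p.2 := hpq.symm
        exact hv ⟨p.1, by rw [hq1, Prod.mk.eta]; exact hp⟩
      · exact P.inj2 p hp q hq hpq
    · intro p hp
      rcases Finset.mem_insert.mp hp with rfl | hp
      · exact iff_of_false (fun h => not_right_of_left h hwl) (fun h => not_right_of_left h hvr)
      · exact P.side p hp
    · intro p hp q hq hpl hqr
      rcases Finset.mem_insert.mp hp with rfl | hp <;>
        rcases Finset.mem_insert.mp hq with rfl | hq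
      · exact absurd hwl (not_right_of_left hpl)
      · exact absurd hwl (not_right_of_left hpl)
      · show Γ.adjB fB p.1 w ↔ Γ.adj p.2 v
        constructor
        · intro hab
          by_contra hno
          exact hnadj p.1 (Finset.mem_image.mpr ⟨p, Finset.mem_filter.mpr ⟨hp, hpl, hno⟩, rfl⟩) hab
        · intro hab
          exact hadj p.1 (Finset.mem_image.mpr ⟨p, Finset.mem_filter.mpr ⟨hp, hpl, hab⟩, rfl⟩)
      · exact P.cross p hp q hq hpl hqr

end BipartiteGraph
end Aux54
section Aux55
open Classical
namespace BipartiteGraph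

variable {V : Type*} {Γ : BipartiteGraph V}

/-- Back-and-forth: any finite partial isomorphism from the switched graph to `Γ`
extends to a full side-preserving permutation realizing the switch `fB`. -/
lemma PIso.extend (hΓ : Γ.IsRandom) {fB : V → Bool} {cl cr : Bool} {Tl Tr : Finset V}
    (hcl : ∀ v ∈ Γ.left, v ∉ Tl → fB v = cl) (hcr : ∀ v ∈ Γ.right, v ∉ Tr → fB v = cr)
    (P₀ : PIso Γ fB) :
    ∃ h : Equiv.Perm V, h ∈ Γ.symLR ∧
      (∀ a ∈ Γ.left, ∀ b ∈ Γ.right, (Γ.adjB fB a b ↔ Γ.adj (h a) (h b))) ∧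
      (∀ p ∈ P₀.s, h p.1 = p.2) := by
  classical
  haveI : Nonempty V := ⟨Γ.left_nonempty.choose⟩
  haveI : Countable V := hΓ.countable
  obtain ⟨e, he⟩ := exists_surjective_nat V
  have step : ∀ P : PIso Γ fB, ∀ v : V,
      ∃ Q : PIso Γ fB, P.s ⊆ Q.s ∧ (∃ w, (v, w) ∈ Q.s) ∧ (∃ w, (w, v) ∈ Q.s) := by
    intro P v
    obtain ⟨Q₁, hQ₁, w₁, hw₁⟩ := P.forth hΓ v
    obtain ⟨Q₂, hQ₂, w₂, hw₂⟩ := Q₁.back hΓ hcl hcr v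
    exact ⟨Q₂, hQ₁.trans hQ₂, ⟨w₁, hQ₂ hw₁⟩, ⟨w₂, hw₂⟩⟩
  choose st hst1 hst2 hst3 using step
  let seq : ℕ → PIso Γ fB := fun n => Nat.rec P₀ (fun k p => st p (e k)) n
  have seq_succ : ∀ n, seq (n + 1) = st (seq n) (e n) := fun n => rfl
  have mono : ∀ m n, m ≤ n → (seq m).s ⊆ (seq n).s := by
    intro m n h
    induction h with
    | refl => exact subset_rfl
    | step h ih =>
        refine ih.trans ?_
        rw [seq_succ]
        exact hst1 _ _
  have compat1 : ∀ {p q : V × V} {n m : ℕ}, p ∈ (seq n).s → q ∈ (seq m).s →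
      p.1 = q.1 → p = q := by
    intro p q n m hp hq h
    exact (seq (max n m)).inj1 p (mono n _ (le_max_left _ _) hp) q
      (mono m _ (le_max_right _ _) hq) h
  have compat2 : ∀ {p q : V × V} {n m : ℕ}, p ∈ (seq n).s → q ∈ (seq m).s →
      p.2 = q.2 → p = q := by
    intro p q n m hp hq h
    exact (seq (max n m)).inj2 p (mono n _ (le_max_left _ _) hp) q
      (mono m _ (le_max_right _ _) hq) h
  have exd : ∀ v : V, ∃ w, ∃ n, (v, w) ∈ (seq n).s := by
    intro v
    obtain ⟨n, rfl⟩ := he v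
    obtain ⟨w, hw⟩ := hst2 (seq n) (e n)
    exact ⟨w, n + 1, by rw [seq_succ]; exact hw⟩
  have exr : ∀ v : V, ∃ w, ∃ n, (w, v) ∈ (seq n).s := by
    intro v
    obtain ⟨n, rfl⟩ := he v
    obtain ⟨w, hw⟩ := hst3 (seq n) (e n)
    exact ⟨w, n + 1, by rw [seq_succ]; exact hw⟩
  choose f hf using exd
  choose f' hf' using exr
  have linv : Function.LeftInverse f' f := by
    intro v
    obtain ⟨n, hn⟩ := hf v
    obtain ⟨m, hm⟩ := hf' (f v)
    have := compat2 hm hn (rfl : (f' (f v), f v).2 = (v, f v).2)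
    exact congrArg Prod.fst this
  have rinv : Function.RightInverse f' f := by
    intro v
    obtain ⟨m, hm⟩ := hf' v
    obtain ⟨n, hn⟩ := hf (f' v)
    have := compat1 hn hm (rfl : (f' v, f (f' v)).1 = (f' v, v).1)
    exact congrArg Prod.snd this
  refine ⟨⟨f, f', linv, rinv⟩, ?_, ?_, ?_⟩
  · constructor
    · intro v
      obtain ⟨n, hn⟩ := hf v
      have := (seq n).side (v, f v) hn
      exact this.symm
    · intro v
      obtain ⟨n, hn⟩ := hf v
      have := (seq n).side_right (v, f v) hn
      exact this.symm
  · intro a ha b hb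
    obtain ⟨n, hn⟩ := hf a
    obtain ⟨m, hm⟩ := hf b
    exact (seq (max n m)).cross (a, f a) (mono n _ (le_max_left _ _) hn)
      (b, f b) (mono m _ (le_max_right _ _) hm) ha hb
  · intro p hp
    obtain ⟨n, hn⟩ := hf p.1
    have hp0 : p ∈ (seq 0).s := hp
    have : (p.1, f p.1) = p := compat1 (n := n) (m := 0) hn hp0 rfl
    exact congrArg Prod.snd this

end BipartiteGraph
end Aux55
section Aux56
open Classical
namespace BipartiteGraph

variable {V : Type*} {Γ : BipartiteGraph V}

lemma adjB_false (a b : V) : Γ.adjB (fun _ => false) a b ↔ Γ.adj a b := by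
  unfold adjB
  simp

lemma mem_autGroup {g : Equiv.Perm V} : g ∈ Γ.autGroup ↔
    (g ∈ Γ.symLR ∧ ∀ a b, Γ.adj a b ↔ Γ.adj (g a) (g b)) := Iff.rfl

lemma aut_of_cross {g : Equiv.Perm V} (hg : g ∈ Γ.symLR)
    (h : ∀ a ∈ Γ.left, ∀ b ∈ Γ.right, (Γ.adj a b ↔ Γ.adj (g a) (g b))) :
    g ∈ Γ.autGroup := by
  refine ⟨hg, fun a b => ?_⟩
  by_cases ha : a ∈ Γ.left
  · by_cases hb : b ∈ Γ.right
    · exact h a ha b hb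
    · constructor
      · intro had
        exact absurd (Γ.adj_dom a b had).2 hb
      · intro had
        exact absurd ((hg.2 b).mp (Γ.adj_dom _ _ had).2) hb
  · constructor
    · intro had
      exact absurd (Γ.adj_dom a b had).1 ha
    · intro had
      exact absurd ((hg.1 a).mp (Γ.adj_dom _ _ had).1) ha

lemma crossFlip_of_adjB {h : V → V} {fB : V → Bool}
    (H : ∀ a ∈ Γ.left, ∀ b ∈ Γ.right, (Γ.adjB fB a b ↔ Γ.adj (h a) (h b))) :
    Γ.CrossFlip h fB := by
  intro a ha b hb
  have := H a ha b hb
  unfold adjB at this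
  tauto

/-- Homogeneity: any finite partial isomorphism of `Γ` extends to an automorphism. -/
lemma exists_aut_extend (hΓ : Γ.IsRandom) (s : Finset (V × V))
    (inj1 : ∀ p ∈ s, ∀ q ∈ s, p.1 = q.1 → p = q)
    (inj2 : ∀ p ∈ s, ∀ q ∈ s, p.2 = q.2 → p = q)
    (side : ∀ p ∈ s, (p.1 ∈ Γ.left ↔ p.2 ∈ Γ.left))
    (cross : ∀ p ∈ s, ∀ q ∈ s, p.1 ∈ Γ.left → q.1 ∈ Γ.right →
      (Γ.adj p.1 q.1 ↔ Γ.adj p.2 q.2)) :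
    ∃ α : Equiv.Perm V, α ∈ Γ.autGroup ∧ ∀ p ∈ s, α p.1 = p.2 := by
  obtain ⟨h, hsym, hcross, hext⟩ := PIso.extend hΓ (cl := false) (cr := false)
    (Tl := ∅) (Tr := ∅) (fun _ _ _ => rfl) (fun _ _ _ => rfl)
    ⟨s, inj1, inj2, side, by
      intro p hp q hq h1 h2
      rw [adjB_false]
      exact cross p hp q hq h1 h2⟩
  refine ⟨h, aut_of_cross hsym fun a ha b hb => ?_, fun p hp => hext p hp⟩
  rw [← adjB_false (Γ := Γ) a b]
  exact hcross a ha b hb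

/-- Existence of a switch with respect to a single vertex. -/
lemma exists_switch_singleton (hΓ : Γ.IsRandom) (v : V) :
    ∃ σ : Equiv.Perm V, Γ.IsSwitch σ {v} ∧
      Γ.CrossFlip σ (fun x => decide (x = v)) := by
  obtain ⟨h, hsym, hcross, _⟩ := PIso.extend (fB := fun x => decide (x = v)) hΓ (cl := false) (cr := false)
    (P₀ := ⟨∅, fun p hp => absurd hp (Finset.notMem_empty p),
      fun p hp => absurd hp (Finset.notMem_empty p),
      fun p hp => absurd hp (Finset.notMem_empty p),
      fun p hp => absurd hp (Finset.notMem_empty p)⟩)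
    (Tl := {v}) (Tr := {v})
    (fun u _ hu => by simp [Finset.mem_singleton] at hu; simp [hu])
    (fun u _ hu => by simp [Finset.mem_singleton] at hu; simp [hu])
  have hcf : Γ.CrossFlip h (fun x => decide (x = v)) := crossFlip_of_adjB hcross
  refine ⟨h, ?_, hcf⟩
  rw [isSwitch_iff]
  refine ⟨hsym, crossFlip_congr hcf fun x => ?_⟩
  simp [Set.mem_singleton_iff]

/-- Existence of a switch with respect to the whole left side. -/
lemma exists_rho (hΓ : Γ.IsRandom) :
    ∃ ρ : Equiv.Perm V, Γ.IsSwitch ρ Γ.left ∧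
      Γ.CrossFlip ρ (fun x => decide (x ∈ Γ.left)) := by
  obtain ⟨h, hsym, hcross, _⟩ := PIso.extend (fB := fun x => decide (x ∈ Γ.left)) hΓ (cl := true) (cr := false)
    (P₀ := ⟨∅, fun p hp => absurd hp (Finset.notMem_empty p),
      fun p hp => absurd hp (Finset.notMem_empty p),
      fun p hp => absurd hp (Finset.notMem_empty p),
      fun p hp => absurd hp (Finset.notMem_empty p)⟩)
    (Tl := ∅) (Tr := ∅)
    (fun u hu _ => by simp [hu])
    (fun u hu _ => by simp [(mem_right_iff_not_left Γ u).mp hu])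
  have hcf : Γ.CrossFlip h (fun x => decide (x ∈ Γ.left)) := crossFlip_of_adjB hcross
  refine ⟨h, ?_, hcf⟩
  rw [isSwitch_iff]
  exact ⟨hsym, hcf⟩

end BipartiteGraph
end Aux56
section Aux57
open Classical

lemma closedClosure_le {V : Type*} {S : Set (Equiv.Perm V)} {K : Subgroup (Equiv.Perm V)}
    (hK : IsClosedSubgroup K) (hS : S ⊆ ↑K) : closedClosure S ≤ K :=
  sInf_le ⟨hK, hS⟩

lemma subset_closedClosure {V : Type*} {S : Set (Equiv.Perm V)} :
    S ⊆ ↑(closedClosure S) := fun _ hg =>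
  Subgroup.mem_sInf.mpr fun _ hK => hK.2 hg

lemma closedClosure_isClosed {V : Type*} {S : Set (Equiv.Perm V)} :
    IsClosedSubgroup (closedClosure S) := by
  intro g hg
  rw [closedClosure, Subgroup.mem_sInf]
  intro K hK
  apply hK.1 g
  intro F
  obtain ⟨h, hh, hhF⟩ := hg F
  exact ⟨h, Subgroup.mem_sInf.mp hh K hK, hhF⟩

namespace BipartiteGraph

variable {V : Type*} {Γ : BipartiteGraph V}

/-- The subgroup of all "generalized switches": side-preserving permutations
admitting some flip-indicator function. -/
def flipGroup (Γ : BipartiteGraph V) : Subgroup (Equiv.Perm V) where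
  carrier := {w | w ∈ Γ.symLR ∧ ∃ fB, Γ.CrossFlip w fB}
  one_mem' := by
    refine ⟨Γ.symLR.one_mem, fun _ => false, fun a ha b hb => ?_⟩
    simp
  mul_mem' := by
    rintro a b ⟨ha, fa, hfa⟩ ⟨hb, fb, hfb⟩
    refine ⟨mul_mem ha hb, fun x => xor (fb x) (fa (b x)), ?_⟩
    have := crossFlip_comp hfa hfb (fun v hv => symLR_left hb hv)
      (fun v hv => symLR_right hb hv)
    exact this
  inv_mem' := by
    rintro a ⟨ha, fa, hfa⟩
    exact ⟨inv_mem ha, fun x => fa ((a⁻¹ : Equiv.Perm V) x), crossFlip_inv ha hfa⟩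

lemma flipGroup_isClosed (Γ : BipartiteGraph V) : IsClosedSubgroup Γ.flipGroup := by
  classical
  intro w hw
  have hsym : w ∈ Γ.symLR := by
    constructor
    · intro v
      obtain ⟨h, hH, hag⟩ := hw {v}
      rw [← hag v (Finset.mem_singleton_self v)]
      exact hH.1.1 v
    · intro v
      obtain ⟨h, hH, hag⟩ := hw {v}
      rw [← hag v (Finset.mem_singleton_self v)]
      exact hH.1.2 v
  obtain ⟨a₀, ha₀⟩ := Γ.left_nonempty
  obtain ⟨b₀, hb₀⟩ := Γ.right_nonempty
  set fB : V → Bool := fun x =>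
    if x ∈ Γ.left then
      xor (decide ¬(Γ.adj x b₀ ↔ Γ.adj (w x) (w b₀)))
          (decide ¬(Γ.adj a₀ b₀ ↔ Γ.adj (w a₀) (w b₀)))
    else decide ¬(Γ.adj a₀ x ↔ Γ.adj (w a₀) (w x)) with hfB
  refine ⟨hsym, fB, ?_⟩
  intro a ha b hb
  obtain ⟨h, hH, hag⟩ := hw {a, b, a₀, b₀}
  have hma : a ∈ ({a, b, a₀, b₀} : Finset V) := by simp
  have hmb : b ∈ ({a, b, a₀, b₀} : Finset V) := by simp
  have hma₀ : a₀ ∈ ({a, b, a₀, b₀} : Finset V) := by simp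
  have hmb₀ : b₀ ∈ ({a, b, a₀, b₀} : Finset V) := by simp
  have ea := hag a hma
  have eb := hag b hmb
  have ea₀ := hag a₀ hma₀
  have eb₀ := hag b₀ hmb₀
  obtain ⟨f, hf⟩ := hH.2
  have R1 := hf a ha b hb
  have R2 := hf a ha b₀ hb₀
  have R3 := hf a₀ ha₀ b hb
  have R4 := hf a₀ ha₀ b₀ hb₀
  have hbl : b ∉ Γ.left := fun h' => not_right_of_left h' hb
  have hfa : fB a = xor (decide (¬(f a = f b₀))) (decide (¬(f a₀ = f b₀))) := by
    rw [hfB]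
    simp only [ha, if_true]
    congr 1
    · exact decide_eq_decide.mpr (not_congr (by rw [← ea, ← eb₀]; exact R2))
    · exact decide_eq_decide.mpr (not_congr (by rw [← ea₀, ← eb₀]; exact R4))
  have hfb : fB b = decide (¬(f a₀ = f b)) := by
    rw [hfB]
    simp only [hbl, if_false]
    exact decide_eq_decide.mpr (not_congr (by rw [← ea₀, ← eb]; exact R3))
  rw [← ea, ← eb, R1, hfa, hfb]
  cases hc1 : f a <;> cases hc2 : f b <;> cases hc3 : f a₀ <;> cases hc4 : f b₀ <;>
    simp_all

/-- Everything in `S_{l,r}(Γ)` is a generalized switch. -/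
lemma flip_of_mem_switchGroup_lr {g : Equiv.Perm V}
    (hg : g ∈ Γ.switchGroup {BSide.l, BSide.r}) :
    g ∈ Γ.symLR ∧ ∃ fB : V → Bool, Γ.CrossFlip g fB := by
  have hmem : g ∈ Γ.flipGroup := by
    refine Subgroup.mem_sInf.mp hg Γ.flipGroup ⟨Γ.flipGroup_isClosed, ?_⟩
    rintro w (hw | hw)
    · refine ⟨hw.1, fun _ => false, fun a ha b hb => ?_⟩
      exact iff_of_true (hw.2 a b) rfl
    · obtain ⟨i, _, v, _, hsw⟩ := hw
      rw [isSwitch_iff] at hsw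
      exact ⟨hsw.1, _, hsw.2⟩
  exact hmem

end BipartiteGraph
end Aux57
section Aux58
open Classical
namespace BipartiteGraph

variable {V : Type*} {Γ : BipartiteGraph V}

lemma switchGroupStar_le_of (G : Subgroup (Equiv.Perm V)) (hG : IsClosedSubgroup G)
    (hAut : ∀ g : Equiv.Perm V, Γ.InAutStar g → g ∈ G) (Y : Set BSide)
    (hY : ∀ i ∈ Y, ∀ w : Equiv.Perm V, (∃ v ∈ Γ.side i, Γ.IsSwitch w {v}) → w ∈ G) :
    Γ.switchGroupStar Y ≤ G := by
  apply closedClosure_le hG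
  rintro w (hw | hw)
  · have hle : Γ.switchGroup Y ≤ G := by
      apply closedClosure_le hG
      rintro x (hx | hx)
      · exact hAut x ⟨hx.1, Or.inl fun a _ b _ => hx.2 a b⟩
      · obtain ⟨i, hi, v, hv, hsw⟩ := hx
        exact hY i hi x ⟨v, hv, hsw⟩
    exact hle hw
  · apply hAut
    refine ⟨hw.1, Or.inr fun a ha b hb => ?_⟩
    have hiff := hw.2 a ha b hb
    have hn := ncard_cross_inter (Γ := Γ) ha hb Γ.left
    have hfalse : ¬ (({a, b} ∩ Γ.left : Set V).ncard ≠ 1) := by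
      rw [hn]
      intro hiff'
      exact not_right_of_left (hiff'.mp ha) hb
    have h2 : ¬(Γ.adj a b ↔ Γ.adj (w a) (w b)) := fun hx => hfalse (hiff.mp hx)
    tauto

lemma exists_inj_avoid {S : Set V} (hS : S.Infinite) (D T : Finset V) :
    ∃ φ : V → V, (∀ x ∈ D, φ x ∈ S ∧ φ x ∉ T) ∧
      (∀ x ∈ D, ∀ y ∈ D, φ x = φ y → x = y) := by
  classical
  induction D using Finset.induction_on with
  | empty => exact ⟨id, by simp, by simp⟩
  | @insert a D ha IH =>
      obtain ⟨φ, hφ1, hφ2⟩ := IH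
      obtain ⟨z, hzS, hz⟩ := hS.exists_notMem_finset (T ∪ D.image φ)
      simp only [Finset.mem_union, Finset.mem_image, not_or, not_exists] at hz
      have hne : ∀ x, x ∈ D → x ≠ a := by
        intro x hx h
        rw [h] at hx
        exact ha hx
      refine ⟨Function.update φ a z, ?_, ?_⟩
      · intro x hx
        rcases Finset.mem_insert.mp hx with rfl | hx
        · rw [Function.update_self]
          exact ⟨hzS, hz.1⟩
        · rw [Function.update_of_ne (hne x hx)]
          exact hφ1 x hx
      · intro x hx y hy hxy
        by_cases hxa : x = a <;> by_cases hya : y = a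
        · rw [hxa, hya]
        · subst hxa
          have hyD : y ∈ D := by
            rcases Finset.mem_insert.mp hy with h | h
            · exact absurd h hya
            · exact h
          rw [Function.update_self, Function.update_of_ne hya] at hxy
          exact absurd ⟨hyD, hxy.symm⟩ (hz.2 y)
        · subst hya
          have hxD : x ∈ D := by
            rcases Finset.mem_insert.mp hx with h | h
            · exact absurd h hxa
            · exact h
          rw [Function.update_self, Function.update_of_ne hxa] at hxy
          exact absurd ⟨hxD, hxy⟩ (hz.2 x)
        · have hxD : x ∈ D := by
            rcases Finset.mem_insert.mp hx with h | h
            · exact absurd h hxa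
            · exact h
          have hyD : y ∈ D := by
            rcases Finset.mem_insert.mp hy with h | h
            · exact absurd h hya
            · exact h
          rw [Function.update_of_ne hxa, Function.update_of_ne hya] at hxy
          exact hφ2 x hxD y hyD hxy

end BipartiteGraph
end Aux58
section Aux59
open Classical
namespace BipartiteGraph

variable {V : Type*} {Γ : BipartiteGraph V}

lemma singleSwitch_mem_of_nonconst_left (hΓ : Γ.IsRandom) (G : Subgroup (Equiv.Perm V))
    (hG : IsClosedSubgroup G) (hAutG : ∀ α : Equiv.Perm V, α ∈ Γ.autGroup → α ∈ G)
    {g : Equiv.Perm V} (hgG : g ∈ G) (hgsym : g ∈ Γ.symLR) {fB : V → Bool}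
    (hflip : Γ.CrossFlip g fB) {u u' : V} (hu : u ∈ Γ.left) (hu' : u' ∈ Γ.left)
    (hne : fB u ≠ fB u') {t : Equiv.Perm V} {v₀ : V} (hv₀ : v₀ ∈ Γ.left)
    (ht : Γ.IsSwitch t {v₀}) : t ∈ G := by
  classical
  have htsym : t ∈ Γ.symLR := ht.1
  have htflip : Γ.CrossFlip t (fun x => decide (x ∈ ({v₀} : Set V))) := (isSwitch_iff.mp ht).2
  have huu' : u ≠ u' := fun h => hne (h ▸ rfl)
  apply hG
  intro F
  set F' : Finset V := insert v₀ F with hF'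
  set Fl : Finset V := F'.filter (· ∈ Γ.left) with hFl
  set Fr : Finset V := F'.filter (· ∈ Γ.right) with hFr
  have hmemFl : ∀ x, x ∈ Fl ↔ (x ∈ F' ∧ x ∈ Γ.left) := by
    intro x; simp [hFl]
  have hmemFr : ∀ x, x ∈ Fr ↔ (x ∈ F' ∧ x ∈ Γ.right) := by
    intro x; simp [hFr]
  have hv₀F' : v₀ ∈ F' := Finset.mem_insert_self _ _
  have hv₀Fl : v₀ ∈ Fl := (hmemFl v₀).mpr ⟨hv₀F', hv₀⟩
  obtain ⟨φ, hφ1, hφ2⟩ := exists_inj_avoid (V := V) hΓ.left_infinite Fl {u, u'}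
  set eL : V → V := fun x => if x = v₀ then u else φ x with heL
  have heLv₀ : eL v₀ = u := by simp [heL]
  have heLleft : ∀ x ∈ Fl, eL x ∈ Γ.left := by
    intro x hx
    by_cases h : x = v₀
    · simp [heL, h, hu]
    · simp only [heL, h, if_false]
      exact (hφ1 x hx).1
  have heLnot : ∀ x ∈ Fl, x ≠ v₀ → (eL x ≠ u ∧ eL x ≠ u') := by
    intro x hx h
    have := (hφ1 x hx).2
    simp only [Finset.mem_insert, Finset.mem_singleton, not_or] at this
    simp only [heL, h, if_false]
    exact this
  have heLu' : ∀ x ∈ Fl, eL x ≠ u' := by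
    intro x hx
    by_cases h : x = v₀
    · simp [heL, h]; exact huu'
    · exact (heLnot x hx h).2
  have heLinj : ∀ x ∈ Fl, ∀ y ∈ Fl, eL x = eL y → x = y := by
    intro x hx y hy hxy
    by_cases h1 : x = v₀ <;> by_cases h2 : y = v₀
    · rw [h1, h2]
    · exfalso
      rw [h1, heLv₀] at hxy
      exact (heLnot y hy h2).1 hxy.symm
    · exfalso
      rw [h2, heLv₀] at hxy
      exact (heLnot x hx h1).1 hxy
    · simp only [heL, h1, h2, if_false] at hxy
      exact hφ2 x hx y hy hxy
  -- key extension step for right-side images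
  have key : ∀ b ∈ Γ.right, ∀ S : Finset V, ∃ y ∈ Γ.right, y ∉ S ∧
      (∀ a ∈ Fl, (Γ.adj (eL a) y ↔ Γ.adj a b)) ∧ (Γ.adj u' y ↔ ¬ Γ.adj v₀ b) := by
    intro b _ S
    set A₁ : Finset V := (Fl.filter (fun a => Γ.adj a b)).image eL with hA₁
    set A₂ : Finset V := (Fl.filter (fun a => ¬ Γ.adj a b)).image eL with hA₂
    have hA₁l : ↑A₁ ⊆ Γ.left := by
      intro x hx
      simp only [hA₁, Finset.coe_image, Set.mem_image, Finset.mem_coe, Finset.mem_filter] at hx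
      obtain ⟨a, ⟨ha, _⟩, rfl⟩ := hx
      exact heLleft a ha
    have hA₂l : ↑A₂ ⊆ Γ.left := by
      intro x hx
      simp only [hA₂, Finset.coe_image, Set.mem_image, Finset.mem_coe, Finset.mem_filter] at hx
      obtain ⟨a, ⟨ha, _⟩, rfl⟩ := hx
      exact heLleft a ha
    have hA12 : ∀ x, x ∈ A₁ → x ∈ A₂ → False := by
      intro x h1 h2
      simp only [hA₁, hA₂, Finset.mem_image, Finset.mem_filter] at h1 h2
      obtain ⟨a, ⟨ha, hadj⟩, rfl⟩ := h1
      obtain ⟨a', ⟨ha', hnadj⟩, he⟩ := h2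
      rw [heLinj a' ha' a ha he] at hnadj
      exact hnadj hadj
    have hu'A₁ : u' ∉ A₁ := by
      intro h
      simp only [hA₁, Finset.mem_image, Finset.mem_filter] at h
      obtain ⟨a, ⟨ha, _⟩, he⟩ := h
      exact heLu' a ha he
    have hu'A₂ : u' ∉ A₂ := by
      intro h
      simp only [hA₂, Finset.mem_image, Finset.mem_filter] at h
      obtain ⟨a, ⟨ha, _⟩, he⟩ := h
      exact heLu' a ha he
    by_cases hvb : Γ.adj v₀ b
    · have hdis : Disjoint A₁ (insert u' A₂) := by
        rw [Finset.disjoint_left]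
        intro x h1 h2
        rcases Finset.mem_insert.mp h2 with rfl | h2
        · exact hu'A₁ h1
        · exact hA12 x h1 h2
      obtain ⟨y, hyr, hyS, hyp, hyn⟩ := extL_avoid hΓ S A₁ (insert u' A₂) hA₁l
        (by rw [Finset.coe_insert]; exact Set.insert_subset hu' hA₂l) hdis
      refine ⟨y, hyr, hyS, ?_, ?_⟩
      · intro a ha
        by_cases hadj : Γ.adj a b
        · exact iff_of_true (hyp (eL a) (by
            exact Finset.mem_image_of_mem eL (Finset.mem_filter.mpr ⟨ha, hadj⟩))) hadj
        · exact iff_of_false (hyn (eL a) (Finset.mem_insert_of_mem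
            (Finset.mem_image_of_mem eL (Finset.mem_filter.mpr ⟨ha, hadj⟩)))) hadj
      · exact iff_of_false (hyn u' (Finset.mem_insert_self _ _)) (fun hx => hx hvb)
    · have hdis : Disjoint (insert u' A₁) A₂ := by
        rw [Finset.disjoint_left]
        intro x h1 h2
        rcases Finset.mem_insert.mp h1 with rfl | h1
        · exact hu'A₂ h2
        · exact hA12 x h1 h2
      obtain ⟨y, hyr, hyS, hyp, hyn⟩ := extL_avoid hΓ S (insert u' A₁) A₂
        (by rw [Finset.coe_insert]; exact Set.insert_subset hu' hA₁l) hA₂l hdis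
      refine ⟨y, hyr, hyS, ?_, ?_⟩
      · intro a ha
        by_cases hadj : Γ.adj a b
        · exact iff_of_true (hyp (eL a) (Finset.mem_insert_of_mem
            (Finset.mem_image_of_mem eL (Finset.mem_filter.mpr ⟨ha, hadj⟩)))) hadj
        · exact iff_of_false (hyn (eL a)
            (Finset.mem_image_of_mem eL (Finset.mem_filter.mpr ⟨ha, hadj⟩))) hadj
      · exact iff_of_true (hyp u' (Finset.mem_insert_self _ _)) hvb
  -- construct right-side images by induction
  have hstep : ∀ B : Finset V, ↑B ⊆ Γ.right → ∃ ψ : V → V,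
      (∀ b ∈ B, ψ b ∈ Γ.right) ∧ (∀ b ∈ B, ∀ b' ∈ B, ψ b = ψ b' → b = b') ∧
      (∀ b ∈ B, ∀ a ∈ Fl, (Γ.adj (eL a) (ψ b) ↔ Γ.adj a b)) ∧
      (∀ b ∈ B, (Γ.adj u' (ψ b) ↔ ¬ Γ.adj v₀ b)) := by
    intro B
    induction B using Finset.induction_on with
    | empty => exact fun _ => ⟨id, by simp, by simp, by simp, by simp⟩
    | @insert b B hbB IH =>
        intro hBr
        have hBr' : ↑B ⊆ Γ.right := by
          intro x hx
          exact hBr (by exact_mod_cast Finset.mem_insert_of_mem (by exact_mod_cast hx))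
        obtain ⟨ψ, hψ1, hψ2, hψ3, hψ4⟩ := IH hBr'
        have hbr : b ∈ Γ.right := hBr (by simp)
        obtain ⟨y, hyr, hyS, hy3, hy4⟩ := key b hbr (B.image ψ)
        have hbne : ∀ b' ∈ B, b' ≠ b := by
          intro b' hb' h
          rw [h] at hb'
          exact hbB hb'
        refine ⟨Function.update ψ b y, ?_, ?_, ?_, ?_⟩
        · intro b' hb'
          rcases Finset.mem_insert.mp hb' with rfl | hb'
          · rw [Function.update_self]; exact hyr
          · rw [Function.update_of_ne (hbne b' hb')]; exact hψ1 b' hb'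
        · intro b1 hb1 b2 hb2 h12
          by_cases e1 : b1 = b <;> by_cases e2 : b2 = b
          · rw [e1, e2]
          · subst e1
            have hb2B : b2 ∈ B := by
              rcases Finset.mem_insert.mp hb2 with h | h
              · exact absurd h e2
              · exact h
            rw [Function.update_self, Function.update_of_ne e2] at h12
            exact absurd (Finset.mem_image.mpr ⟨b2, hb2B, h12.symm⟩) hyS
          · subst e2
            have hb1B : b1 ∈ B := by
              rcases Finset.mem_insert.mp hb1 with h | h
              · exact absurd h e1
              · exact h
            rw [Function.update_self, Function.update_of_ne e1] at h12
            exact absurd (Finset.mem_image.mpr ⟨b1, hb1B, h12⟩) hyS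
          · have hb1B : b1 ∈ B := by
              rcases Finset.mem_insert.mp hb1 with h | h
              · exact absurd h e1
              · exact h
            have hb2B : b2 ∈ B := by
              rcases Finset.mem_insert.mp hb2 with h | h
              · exact absurd h e2
              · exact h
            rw [Function.update_of_ne e1, Function.update_of_ne e2] at h12
            exact hψ2 b1 hb1B b2 hb2B h12
        · intro b' hb' a ha
          rcases Finset.mem_insert.mp hb' with rfl | hb'
          · rw [Function.update_self]; exact hy3 a ha
          · rw [Function.update_of_ne (hbne b' hb')]; exact hψ3 b' hb' a ha
        · intro b' hb'
          rcases Finset.mem_insert.mp hb' with rfl | hb'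
          · rw [Function.update_self]; exact hy4
          · rw [Function.update_of_ne (hbne b' hb')]; exact hψ4 b' hb'
  obtain ⟨ψ, hψ1, hψ2, hψ3, hψ4⟩ := hstep Fr (by
    intro x hx
    exact ((hmemFr x).mp (Finset.mem_coe.mp hx)).2)
  -- the embedding e
  set e : V → V := fun x => if x ∈ Γ.left then eL x else ψ x with he
  have heval_l : ∀ x ∈ Γ.left, e x = eL x := by
    intro x hx; simp [he, hx]
  have heval_r : ∀ x ∈ Γ.right, e x = ψ x := by
    intro x hx
    have hnl : x ∉ Γ.left := fun h => not_right_of_left h hx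
    simp [he, hnl]
  have hev₀ : e v₀ = u := by rw [heval_l v₀ hv₀, heLv₀]
  have heside : ∀ x ∈ F', (e x ∈ Γ.left ↔ x ∈ Γ.left) := by
    intro x hx
    rcases mem_side_total Γ x with h | h
    · rw [heval_l x h]
      exact iff_of_true (heLleft x ((hmemFl x).mpr ⟨hx, h⟩)) h
    · rw [heval_r x h]
      exact iff_of_false (fun h' => not_right_of_left h' (hψ1 x ((hmemFr x).mpr ⟨hx, h⟩)))
        (fun h' => not_right_of_left h' h)
  have heinj : ∀ x ∈ F', ∀ y ∈ F', e x = e y → x = y := by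
    intro x hx y hy hxy
    rcases mem_side_total Γ x with h1 | h1 <;> rcases mem_side_total Γ y with h2 | h2
    · rw [heval_l x h1, heval_l y h2] at hxy
      exact heLinj x ((hmemFl x).mpr ⟨hx, h1⟩) y ((hmemFl y).mpr ⟨hy, h2⟩) hxy
    · exfalso
      rw [heval_l x h1, heval_r y h2] at hxy
      exact not_right_of_left (heLleft x ((hmemFl x).mpr ⟨hx, h1⟩))
        (hxy ▸ hψ1 y ((hmemFr y).mpr ⟨hy, h2⟩))
    · exfalso
      rw [heval_r x h1, heval_l y h2] at hxy
      exact not_right_of_left (heLleft y ((hmemFl y).mpr ⟨hy, h2⟩))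
        (hxy ▸ hψ1 x ((hmemFr x).mpr ⟨hx, h1⟩))
    · rw [heval_r x h1, heval_r y h2] at hxy
      exact hψ2 x ((hmemFr x).mpr ⟨hx, h1⟩) y ((hmemFr y).mpr ⟨hy, h2⟩) hxy
  have hecross : ∀ x ∈ F', ∀ y ∈ F', x ∈ Γ.left → y ∈ Γ.right →
      (Γ.adj x y ↔ Γ.adj (e x) (e y)) := by
    intro x hx y hy h1 h2
    rw [heval_l x h1, heval_r y h2]
    exact (hψ3 y ((hmemFr y).mpr ⟨hy, h2⟩) x ((hmemFl x).mpr ⟨hx, h1⟩)).symm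
  have heu' : ∀ y ∈ F', y ∈ Γ.right → (Γ.adj u' (e y) ↔ ¬ Γ.adj v₀ y) := by
    intro y hy h2
    rw [heval_r y h2]
    exact hψ4 y ((hmemFr y).mpr ⟨hy, h2⟩)
  have henotu : ∀ x ∈ F', x ≠ v₀ → (e x ≠ u ∧ e x ≠ u') := by
    intro x hx h
    rcases mem_side_total Γ x with h1 | h1
    · rw [heval_l x h1]
      exact heLnot x ((hmemFl x).mpr ⟨hx, h1⟩) h
    · rw [heval_r x h1]
      have hxr := hψ1 x ((hmemFr x).mpr ⟨hx, h1⟩)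
      exact ⟨fun hh => not_right_of_left hu (hh ▸ hxr), fun hh => not_right_of_left hu' (hh ▸ hxr)⟩
  -- α₃ : automorphism extending e on F'
  obtain ⟨α₃, hα₃aut, hα₃ext⟩ := exists_aut_extend hΓ (F'.image (fun x => (x, e x)))
    (by
      intro p hp q hq hpq
      obtain ⟨x, hx, rfl⟩ := Finset.mem_image.mp hp
      obtain ⟨y, hy, rfl⟩ := Finset.mem_image.mp hq
      have hxy : x = y := hpq
      rw [hxy])
    (by
      intro p hp q hq hpq
      obtain ⟨x, hx, rfl⟩ := Finset.mem_image.mp hp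
      obtain ⟨y, hy, rfl⟩ := Finset.mem_image.mp hq
      have hxy : x = y := heinj x hx y hy hpq
      rw [hxy])
    (by
      intro p hp
      obtain ⟨x, hx, rfl⟩ := Finset.mem_image.mp hp
      exact (heside x hx).symm)
    (by
      intro p hp q hq h1 h2
      obtain ⟨x, hx, rfl⟩ := Finset.mem_image.mp hp
      obtain ⟨y, hy, rfl⟩ := Finset.mem_image.mp hq
      exact hecross x hx y hy h1 h2)
  have hα₃ : ∀ x ∈ F', α₃ x = e x := fun x hx =>
    hα₃ext (x, e x) (Finset.mem_image_of_mem _ hx)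
  -- α₂ : automorphism fixing g(e(F' \ v₀)) and sending g u to g u'
  have hgenotu : ∀ x ∈ F'.erase v₀, g (e x) ≠ g u ∧ g (e x) ≠ g u' := by
    intro x hx
    have hxF : x ∈ F' := Finset.mem_of_mem_erase hx
    have hxv : x ≠ v₀ := Finset.ne_of_mem_erase hx
    obtain ⟨h1, h2⟩ := henotu x hxF hxv
    exact ⟨fun h => h1 (g.injective h), fun h => h2 (g.injective h)⟩
  obtain ⟨α₂, hα₂aut, hα₂ext⟩ := exists_aut_extend hΓ
    (insert (g u, g u') ((F'.erase v₀).image (fun x => (g (e x), g (e x)))))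
    (by
      intro p hp q hq hpq
      rcases Finset.mem_insert.mp hp with rfl | hp <;>
        rcases Finset.mem_insert.mp hq with rfl | hq
      · rfl
      · obtain ⟨y, hy, rfl⟩ := Finset.mem_image.mp hq
        exact absurd (show g (e y) = g u from hpq.symm) (hgenotu y hy).1
      · obtain ⟨x, hx, rfl⟩ := Finset.mem_image.mp hp
        exact absurd (show g (e x) = g u from hpq) (hgenotu x hx).1
      · obtain ⟨x, hx, rfl⟩ := Finset.mem_image.mp hp
        obtain ⟨y, hy, rfl⟩ := Finset.mem_image.mp hq
        have hxy : x = y := heinj x (Finset.mem_of_mem_erase hx) y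
          (Finset.mem_of_mem_erase hy) (g.injective hpq)
        rw [hxy])
    (by
      intro p hp q hq hpq
      rcases Finset.mem_insert.mp hp with rfl | hp <;>
        rcases Finset.mem_insert.mp hq with rfl | hq
      · rfl
      · obtain ⟨y, hy, rfl⟩ := Finset.mem_image.mp hq
        exact absurd (show g (e y) = g u' from hpq.symm) (hgenotu y hy).2
      · obtain ⟨x, hx, rfl⟩ := Finset.mem_image.mp hp
        exact absurd (show g (e x) = g u' from hpq) (hgenotu x hx).2
      · obtain ⟨x, hx, rfl⟩ := Finset.mem_image.mp hp
        obtain ⟨y, hy, rfl⟩ := Finset.mem_image.mp hq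
        have hxy : x = y := heinj x (Finset.mem_of_mem_erase hx) y
          (Finset.mem_of_mem_erase hy) (g.injective hpq)
        rw [hxy])
    (by
      intro p hp
      rcases Finset.mem_insert.mp hp with rfl | hp
      · exact iff_of_true (symLR_left hgsym hu) (symLR_left hgsym hu')
      · obtain ⟨x, hx, rfl⟩ := Finset.mem_image.mp hp
        exact Iff.rfl)
    (by
      intro p hp q hq h1 h2
      rcases Finset.mem_insert.mp hp with rfl | hp <;>
        rcases Finset.mem_insert.mp hq with rfl | hq
      · exact absurd h2 (not_right_of_left (symLR_left hgsym hu))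
      · obtain ⟨y, hy, rfl⟩ := Finset.mem_image.mp hq
        have hyF : y ∈ F' := Finset.mem_of_mem_erase hy
        have heyr : e y ∈ Γ.right := (hgsym.2 (e y)).mp h2
        have hyr : y ∈ Γ.right := by
          rw [mem_right_iff_not_left]
          intro hyl
          exact not_right_of_left ((heside y hyF).mpr hyl) heyr
        have E3 := hflip u hu (e y) heyr
        have E4 := hflip u' hu' (e y) heyr
        have E1 : Γ.adj u (e y) ↔ Γ.adj v₀ y := by
          have hc := hecross v₀ hv₀F' y hyF hv₀ hyr
          rw [hev₀] at hc
          exact hc.symm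
        have E2 := heu' y hyF hyr
        show Γ.adj (g u) (g (e y)) ↔ Γ.adj (g u') (g (e y))
        have hBval : fB u = !fB u' := Bool.eq_not_of_ne hne
        have hBool : (fB u = fB (e y)) ↔ ¬ (fB u' = fB (e y)) := by
          rw [hBval]
          cases fB u' <;> cases fB (e y) <;> simp
        tauto
      · obtain ⟨x, hx, rfl⟩ := Finset.mem_image.mp hp
        exact absurd h2 (not_right_of_left (symLR_left hgsym hu))
      · obtain ⟨x, hx, rfl⟩ := Finset.mem_image.mp hp
        obtain ⟨y, hy, rfl⟩ := Finset.mem_image.mp hq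
        exact Iff.rfl)
  have hα₂gu : α₂ (g u) = g u' := hα₂ext (g u, g u') (Finset.mem_insert_self _ _)
  have hα₂id : ∀ x ∈ F'.erase v₀, α₂ (g (e x)) = g (e x) := fun x hx =>
    hα₂ext (g (e x), g (e x)) (Finset.mem_insert_of_mem (Finset.mem_image_of_mem _ hx))
  set w : Equiv.Perm V := g⁻¹ * α₂ * g * α₃ with hwdef
  have hwapp : ∀ x, w x = g⁻¹ (α₂ (g (α₃ x))) := by
    intro x
    simp [hwdef, Equiv.Perm.mul_apply]
  have hwval : ∀ x ∈ F', x ≠ v₀ → w x = e x := by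
    intro x hx hxv
    rw [hwapp, hα₃ x hx, hα₂id x (Finset.mem_erase.mpr ⟨hxv, hx⟩), show ∀ x, g⁻¹ (g x) = x from fun x => by simp]
  have hwv₀ : w v₀ = u' := by
    rw [hwapp, hα₃ v₀ hv₀F', hev₀, hα₂gu, show ∀ x, g⁻¹ (g x) = x from fun x => by simp]
  have hwsym : w ∈ Γ.symLR :=
    mul_mem (mul_mem (mul_mem (inv_mem hgsym) hα₂aut.1) hgsym) hα₃aut.1
  -- α₁ : automorphism carrying w-values to t-values on F'
  obtain ⟨α₁, hα₁aut, hα₁ext⟩ := exists_aut_extend hΓ (F'.image fun x => (w x, t x))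
    (by
      intro p hp q hq hpq
      obtain ⟨x, hx, rfl⟩ := Finset.mem_image.mp hp
      obtain ⟨y, hy, rfl⟩ := Finset.mem_image.mp hq
      have hxy : x = y := w.injective hpq
      rw [hxy])
    (by
      intro p hp q hq hpq
      obtain ⟨x, hx, rfl⟩ := Finset.mem_image.mp hp
      obtain ⟨y, hy, rfl⟩ := Finset.mem_image.mp hq
      have hxy : x = y := t.injective hpq
      rw [hxy])
    (by
      intro p hp
      obtain ⟨x, hx, rfl⟩ := Finset.mem_image.mp hp
      exact (hwsym.1 x).trans (htsym.1 x).symm)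
    (by
      intro p hp q hq h1 h2
      obtain ⟨x, hx, rfl⟩ := Finset.mem_image.mp hp
      obtain ⟨y, hy, rfl⟩ := Finset.mem_image.mp hq
      have hxl : x ∈ Γ.left := (hwsym.1 x).mp h1
      have hyr : y ∈ Γ.right := (hwsym.2 y).mp h2
      have hyv : y ≠ v₀ := fun h => not_right_of_left hv₀ (h ▸ hyr)
      have hwy : w y = e y := hwval y hy hyv
      have T := htflip x hxl y hyr
      by_cases hxv : x = v₀
      · subst hxv
        show Γ.adj (w x) (w y) ↔ Γ.adj (t x) (t y)
        rw [hwv₀, hwy]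
        have E2 := heu' y hy hyr
        have T' : ¬(Γ.adj x y ↔ Γ.adj (t x) (t y)) := by
          simpa [Set.mem_singleton_iff, hyv] using T
        exact E2.trans (_root_.not_iff.mp T')
      · show Γ.adj (w x) (w y) ↔ Γ.adj (t x) (t y)
        rw [hwval x hx hxv, hwy]
        have EC := hecross x hx y hy hxl hyr
        have T' : Γ.adj x y ↔ Γ.adj (t x) (t y) := by
          simpa [Set.mem_singleton_iff, hxv, hyv] using T
        exact EC.symm.trans T')
  have hα₁ : ∀ x ∈ F', α₁ (w x) = t x := fun x hx =>
    hα₁ext _ (Finset.mem_image_of_mem _ hx)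
  refine ⟨α₁ * w, ?_, ?_⟩
  · refine mul_mem (hAutG α₁ hα₁aut) ?_
    rw [hwdef]
    exact mul_mem (mul_mem (mul_mem (inv_mem hgG) (hAutG α₂ hα₂aut)) hgG) (hAutG α₃ hα₃aut)
  · intro x hx
    have hx' : x ∈ F' := Finset.mem_insert_of_mem hx
    rw [Equiv.Perm.mul_apply]
    exact hα₁ x hx'

end BipartiteGraph
end Aux59
section Aux60
open Classical
namespace BipartiteGraph

variable {V : Type*} {Γ : BipartiteGraph V}

/-- The transpose bipartite graph: sides swapped, adjacency flipped. -/
def transpose (Γ : BipartiteGraph V) : BipartiteGraph V where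
  left := Γ.right
  right := Γ.left
  adj := fun a b => Γ.adj b a
  left_nonempty := Γ.right_nonempty
  right_nonempty := Γ.left_nonempty
  union_eq := by rw [Set.union_comm]; exact Γ.union_eq
  disjoint_sides := Γ.disjoint_sides.symm
  adj_dom := fun a b h => ⟨(Γ.adj_dom b a h).2, (Γ.adj_dom b a h).1⟩

lemma transpose_isRandom (hΓ : Γ.IsRandom) : Γ.transpose.IsRandom where
  countable := hΓ.countable
  left_infinite := hΓ.right_infinite
  right_infinite := hΓ.left_infinite
  ext_left := fun X₁ X₂ h1 h2 hd => hΓ.ext_right X₁ X₂ h1 h2 hd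
  ext_right := fun X₁ X₂ h1 h2 hd => hΓ.ext_left X₁ X₂ h1 h2 hd

lemma transpose_symLR {w : Equiv.Perm V} : w ∈ Γ.transpose.symLR ↔ w ∈ Γ.symLR :=
  ⟨fun h => ⟨h.2, h.1⟩, fun h => ⟨h.2, h.1⟩⟩

lemma transpose_autGroup {α : Equiv.Perm V} :
    α ∈ Γ.transpose.autGroup ↔ α ∈ Γ.autGroup :=
  ⟨fun h => ⟨transpose_symLR.mp h.1, fun a b => h.2 b a⟩,
   fun h => ⟨transpose_symLR.mpr h.1, fun a b => h.2 b a⟩⟩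

lemma transpose_isSwitch {w : Equiv.Perm V} {A : Set V} :
    Γ.transpose.IsSwitch w A ↔ Γ.IsSwitch w A := by
  unfold IsSwitch
  constructor
  · rintro ⟨h1, h2⟩
    refine ⟨transpose_symLR.mp h1, fun a ha b hb => ?_⟩
    have h3 := h2 b hb a ha
    rwa [Set.pair_comm b a] at h3
  · rintro ⟨h1, h2⟩
    refine ⟨transpose_symLR.mpr h1, fun a ha b hb => ?_⟩
    have h3 := h2 b hb a ha
    rwa [Set.pair_comm b a] at h3

lemma transpose_crossFlip {w : V → V} {fB : V → Bool} :
    Γ.transpose.CrossFlip w fB ↔ Γ.CrossFlip w fB := by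
  unfold CrossFlip
  constructor
  · intro h a ha b hb
    have h3 := h b hb a ha
    rw [eq_comm] at h3
    exact h3
  · intro h a ha b hb
    have h3 := h b hb a ha
    rw [eq_comm] at h3
    exact h3

lemma singleSwitch_mem_of_nonconst_right (hΓ : Γ.IsRandom) (G : Subgroup (Equiv.Perm V))
    (hG : IsClosedSubgroup G) (hAutG : ∀ α : Equiv.Perm V, α ∈ Γ.autGroup → α ∈ G)
    {g : Equiv.Perm V} (hgG : g ∈ G) (hgsym : g ∈ Γ.symLR) {fB : V → Bool}
    (hflip : Γ.CrossFlip g fB) {u u' : V} (hu : u ∈ Γ.right) (hu' : u' ∈ Γ.right)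
    (hne : fB u ≠ fB u') {t : Equiv.Perm V} {v₀ : V} (hv₀ : v₀ ∈ Γ.right)
    (ht : Γ.IsSwitch t {v₀}) : t ∈ G :=
  singleSwitch_mem_of_nonconst_left (Γ := Γ.transpose) (transpose_isRandom hΓ) G hG
    (fun α h => hAutG α (transpose_autGroup.mp h)) hgG (transpose_symLR.mpr hgsym)
    (transpose_crossFlip.mpr hflip) hu hu' hne hv₀ (transpose_isSwitch.mpr ht)

end BipartiteGraph
end Aux60
section Aux61
open Classical

lemma iff_transfer {P A B : Prop} (h : (P ↔ A) ↔ (P ↔ B)) : A ↔ B := by tauto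

lemma xor_const_inj {a b c : Bool} : (xor a c = xor b c) ↔ (a = b) := by
  revert a b c
  decide

namespace BipartiteGraph

variable {V : Type*} {Γ : BipartiteGraph V}

lemma aut_mem_switchGroup {X : Set BSide} {α : Equiv.Perm V} (hα : α ∈ Γ.autGroup) :
    α ∈ Γ.switchGroup X :=
  subset_closedClosure (Or.inl hα)

lemma switchGroup_le_star (X : Set BSide) : Γ.switchGroup X ≤ Γ.switchGroupStar X :=
  fun _ hx => subset_closedClosure (Or.inl hx)

lemma rho_mem_star {X : Set BSide} {ρ : Equiv.Perm V} (h : Γ.IsSwitch ρ Γ.left) :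
    ρ ∈ Γ.switchGroupStar X :=
  subset_closedClosure (Or.inr h)

lemma switch_mem_switchGroup {X : Set BSide} {i : BSide} {v : V} {σ : Equiv.Perm V}
    (hi : i ∈ X) (hv : v ∈ Γ.side i) (h : Γ.IsSwitch σ {v}) : σ ∈ Γ.switchGroup X :=
  subset_closedClosure (Or.inr ⟨i, hi, v, hv, h⟩)

lemma exists_switch_finset (hΓ : Γ.IsRandom) (X : Set BSide) (C : Finset V)
    (hC : ∀ v ∈ C, ∃ i ∈ X, v ∈ Γ.side i) :
    ∃ h : Equiv.Perm V, h ∈ Γ.switchGroupStar X ∧ h ∈ Γ.symLR ∧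
      Γ.CrossFlip h (fun x => decide (x ∈ C)) := by
  classical
  induction C using Finset.induction_on with
  | empty =>
      refine ⟨1, one_mem _, Γ.symLR.one_mem, fun a ha b hb => ?_⟩
      simp
  | @insert v C hv IH =>
      obtain ⟨h, hmem, hsym, hflip⟩ := IH (fun x hx => hC x (Finset.mem_insert_of_mem hx))
      obtain ⟨i, hi, hvi⟩ := hC v (Finset.mem_insert_self _ _)
      obtain ⟨σ, hσsw, hσflip⟩ := exists_switch_singleton hΓ v
      have hσsym : σ ∈ Γ.symLR := hσsw.1
      obtain ⟨β, hβaut, hβext⟩ := exists_aut_extend hΓ (C.image fun c => (σ c, c))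
        (by
          intro p hp q hq hpq
          obtain ⟨c, hc, rfl⟩ := Finset.mem_image.mp hp
          obtain ⟨c', hc', rfl⟩ := Finset.mem_image.mp hq
          have : c = c' := σ.injective hpq
          rw [this])
        (by
          intro p hp q hq hpq
          obtain ⟨c, hc, rfl⟩ := Finset.mem_image.mp hp
          obtain ⟨c', hc', rfl⟩ := Finset.mem_image.mp hq
          have : c = c' := hpq
          rw [this])
        (by
          intro p hp
          obtain ⟨c, hc, rfl⟩ := Finset.mem_image.mp hp
          exact hσsym.1 c)
        (by
          intro p hp q hq h1 h2
          obtain ⟨c, hc, rfl⟩ := Finset.mem_image.mp hp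
          obtain ⟨c', hc', rfl⟩ := Finset.mem_image.mp hq
          have hcl : c ∈ Γ.left := (hσsym.1 c).mp h1
          have hcr : c' ∈ Γ.right := (hσsym.2 c').mp h2
          have hF := hσflip c hcl c' hcr
          have hc1 : c ≠ v := fun hh => hv (hh ▸ hc)
          have hc2 : c' ≠ v := fun hh => hv (hh ▸ hc')
          simp only [hc1, hc2, decide_false] at hF
          exact (hF.mpr trivial).symm)
      have hβ : ∀ c ∈ C, β (σ c) = c := fun c hc =>
        hβext (σ c, c) (Finset.mem_image_of_mem _ hc)
      have hβflip : Γ.CrossFlip (⇑β) (fun _ => false) := fun a _ b _ =>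
        iff_of_true (hβaut.2 a b) rfl
      have c1 := crossFlip_comp hβflip hσflip
        (fun z hz => symLR_left hσsym hz) (fun z hz => symLR_right hσsym hz)
      have c2 := crossFlip_comp hflip c1
        (fun z hz => symLR_left hβaut.1 (symLR_left hσsym hz))
        (fun z hz => symLR_right hβaut.1 (symLR_right hσsym hz))
      refine ⟨h * β * σ, ?_, mul_mem (mul_mem hsym hβaut.1) hσsym, ?_⟩
      · exact mul_mem (mul_mem hmem (switchGroup_le_star X (aut_mem_switchGroup hβaut)))
          (switchGroup_le_star X (switch_mem_switchGroup hi hvi hσsw))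
      · refine crossFlip_congr (Γ := Γ) (g := ⇑(h * β * σ)) (f := fun x =>
          xor (xor (decide (x = v)) false) (decide (β (σ x) ∈ C))) ?_ ?_
        · exact c2
        · intro x
          by_cases hxC : x ∈ C
          · have hβx : β (σ x) = x := hβ x hxC
            have hxv : x ≠ v := fun hh => hv (hh ▸ hxC)
            simp [hβx, hxC, hxv]
          · have hβx : β (σ x) ∉ C := by
              intro hc
              have h2 : β (σ (β (σ x))) = β (σ x) := hβ _ hc
              have h3 : β (σ x) = x := σ.injective (β.injective h2)
              rw [h3] at hc
              exact hxC hc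
            by_cases hxv : x = v
            · subst hxv
              simp [hβx, hxC]
            · simp [hβx, hxC, hxv]

lemma exists_switch_finset_rho (hΓ : Γ.IsRandom) (X : Set BSide) (C : Finset V)
    (hC : ∀ v ∈ C, ∃ i ∈ X, v ∈ Γ.side i) (ε : Bool) :
    ∃ h : Equiv.Perm V, h ∈ Γ.switchGroupStar X ∧ h ∈ Γ.symLR ∧
      Γ.CrossFlip h (fun x => xor (decide (x ∈ C)) (ε && decide (x ∈ Γ.left))) := by
  obtain ⟨h₀, h₀star, h₀sym, h₀flip⟩ := exists_switch_finset hΓ X C hC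
  cases ε with
  | false =>
      refine ⟨h₀, h₀star, h₀sym, crossFlip_congr h₀flip fun x => ?_⟩
      simp
  | true =>
      obtain ⟨ρ, hρsw, hρflip⟩ := exists_rho hΓ
      have hρsym : ρ ∈ Γ.symLR := hρsw.1
      have c1 := crossFlip_comp hρflip h₀flip
        (fun z hz => symLR_left h₀sym hz) (fun z hz => symLR_right h₀sym hz)
      refine ⟨ρ * h₀, mul_mem (rho_mem_star hρsw) h₀star, mul_mem hρsym h₀sym,
        crossFlip_congr c1 fun x => ?_⟩
      have : decide (h₀ x ∈ Γ.left) = decide (x ∈ Γ.left) :=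
        decide_eq_decide.mpr (h₀sym.1 x)
      simp [this, Bool.xor_comm]

end BipartiteGraph
end Aux61
open BipartiteGraph in
theorem closed_subgroup_of_switchGroup_lr' {V : Type*} (Γ : BipartiteGraph V)
    (hΓ : Γ.IsRandom) (G : Subgroup (Equiv.Perm V)) (hG : IsClosedSubgroup G)
    (hAut : ∀ g : Equiv.Perm V, Γ.InAutStar g → g ∈ G)
    (hle : G ≤ Γ.switchGroup {BSide.l, BSide.r})
    (X : Set BSide) (hX : Γ.switchGroupStar X ≤ G)
    (hXmax : ∀ Y : Set BSide, Γ.switchGroupStar Y ≤ G → Y ⊆ X) :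
    G ≤ Γ.switchGroupStar X ∧ G = Γ.switchGroupStar X := by
  classical
  have hAutG : ∀ α : Equiv.Perm V, α ∈ Γ.autGroup → α ∈ G := fun α hα =>
    hAut α ⟨hα.1, Or.inl fun a _ b _ => hα.2 a b⟩
  have hYX : ∀ i : BSide,
      (∀ w : Equiv.Perm V, (∃ v ∈ Γ.side i, Γ.IsSwitch w {v}) → w ∈ G) → i ∈ X := by
    intro i hi
    have hsub := hXmax {i} (switchGroupStar_le_of G hG hAut {i} (by
      intro j hj w hw
      rw [Set.mem_singleton_iff] at hj
      subst hj
      exact hi w hw))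
    exact hsub rfl
  have part1 : G ≤ Γ.switchGroupStar X := by
    intro g hgG
    obtain ⟨hgsym, fB, hflip⟩ := flip_of_mem_switchGroup_lr (hle hgG)
    have hdichL : BSide.l ∉ X → ∀ x ∈ Γ.left, ∀ y ∈ Γ.left, fB x = fB y := by
      intro hlX
      by_contra hc
      push_neg at hc
      obtain ⟨u, hu, u', hu', hne⟩ := hc
      apply hlX
      apply hYX BSide.l
      rintro w ⟨v₀, hv₀, hsw⟩
      exact singleSwitch_mem_of_nonconst_left hΓ G hG hAutG hgG hgsym hflip
        hu hu' hne hv₀ hsw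
    have hdichR : BSide.r ∉ X → ∀ x ∈ Γ.right, ∀ y ∈ Γ.right, fB x = fB y := by
      intro hrX
      by_contra hc
      push_neg at hc
      obtain ⟨u, hu, u', hu', hne⟩ := hc
      apply hrX
      apply hYX BSide.r
      rintro w ⟨v₀, hv₀, hsw⟩
      exact singleSwitch_mem_of_nonconst_right hΓ G hG hAutG hgG hgsym hflip
        hu hu' hne hv₀ hsw
    apply Subgroup.mem_sInf.mpr
    intro K hK
    apply hK.1 g
    intro F
    obtain ⟨a₀, ha₀⟩ := Γ.left_nonempty
    obtain ⟨b₀, hb₀⟩ := Γ.right_nonempty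
    have assemble : ∀ (fB' : V → Bool) (ε : Bool) (C : Finset V),
        (∀ v ∈ C, ∃ i ∈ X, v ∈ Γ.side i) →
        (∀ x y : V, ((fB' x = fB' y) ↔ (fB x = fB y))) →
        (∀ x ∈ F, fB' x = xor (decide (x ∈ C)) (ε && decide (x ∈ Γ.left))) →
        ∃ h ∈ K, ∀ x ∈ F, h x = g x := by
      intro fB' ε C hC hEquiv hOnF
      obtain ⟨h₀, h₀star, h₀sym, h₀flip⟩ := exists_switch_finset_rho hΓ X C hC ε
      obtain ⟨α, hαaut, hαext⟩ := exists_aut_extend hΓ (F.image fun x => (h₀ x, g x))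
        (by
          intro p hp q hq hpq
          obtain ⟨x, hx, rfl⟩ := Finset.mem_image.mp hp
          obtain ⟨y, hy, rfl⟩ := Finset.mem_image.mp hq
          have hxy : x = y := h₀.injective hpq
          rw [hxy])
        (by
          intro p hp q hq hpq
          obtain ⟨x, hx, rfl⟩ := Finset.mem_image.mp hp
          obtain ⟨y, hy, rfl⟩ := Finset.mem_image.mp hq
          have hxy : x = y := g.injective hpq
          rw [hxy])
        (by
          intro p hp
          obtain ⟨x, hx, rfl⟩ := Finset.mem_image.mp hp
          exact (h₀sym.1 x).trans (hgsym.1 x).symm)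
        (by
          intro p hp q hq h1 h2
          obtain ⟨x, hx, rfl⟩ := Finset.mem_image.mp hp
          obtain ⟨y, hy, rfl⟩ := Finset.mem_image.mp hq
          have hxl : x ∈ Γ.left := (h₀sym.1 x).mp h1
          have hyr : y ∈ Γ.right := (h₀sym.2 y).mp h2
          have H1 := h₀flip x hxl y hyr
          have H2 := hflip x hxl y hyr
          have hQ : (xor (decide (x ∈ C)) (ε && decide (x ∈ Γ.left)) =
              xor (decide (y ∈ C)) (ε && decide (y ∈ Γ.left))) ↔ (fB x = fB y) := by
            rw [← hOnF x hx, ← hOnF y hy]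
            exact hEquiv x y
          rw [hQ] at H1
          exact iff_transfer (H1.trans H2.symm))
      have hα : ∀ x ∈ F, α (h₀ x) = g x := fun x hx =>
        hαext _ (Finset.mem_image_of_mem _ hx)
      have hstarmem : α * h₀ ∈ Γ.switchGroupStar X :=
        mul_mem (switchGroup_le_star X (aut_mem_switchGroup hαaut)) h₀star
      refine ⟨α * h₀, Subgroup.mem_sInf.mp hstarmem K hK, fun x hx => ?_⟩
      rw [Equiv.Perm.mul_apply]
      exact hα x hx
    have honf : ∀ fB' : V → Bool, ∀ x ∈ F,
        fB' x = xor (decide (x ∈ F.filter (fun z => fB' z = true)))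
          (false && decide (x ∈ Γ.left)) := by
      intro fB' x hx
      by_cases hfx : fB' x = true
      · have hmem : x ∈ F.filter (fun z => fB' z = true) := Finset.mem_filter.mpr ⟨hx, hfx⟩
        simp [hmem, hfx]
      · have hmem : x ∉ F.filter (fun z => fB' z = true) :=
          fun h => hfx (Finset.mem_filter.mp h).2
        have hfx' : fB' x = false := by
          cases h : fB' x
          · rfl
          · exact absurd h hfx
        simp [hmem, hfx']
    by_cases hlX : BSide.l ∈ X <;> by_cases hrX : BSide.r ∈ X
    · refine assemble fB false (F.filter fun z => fB z = true) ?_ (fun x y => Iff.rfl)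
        (honf fB)
      intro v hv
      rcases mem_side_total Γ v with h | h
      · exact ⟨BSide.l, hlX, h⟩
      · exact ⟨BSide.r, hrX, h⟩
    · have hcR := hdichR hrX
      refine assemble (fun z => xor (fB z) (fB b₀)) false
        (F.filter fun z => xor (fB z) (fB b₀) = true) ?_ (fun x y => xor_const_inj)
        (honf _)
      intro v hv
      have hv2 := (Finset.mem_filter.mp hv).2
      rcases mem_side_total Γ v with h | h
      · exact ⟨BSide.l, hlX, h⟩
      · exfalso
        rw [hcR v h b₀ hb₀] at hv2
        simp at hv2
    · have hcL := hdichL hlX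
      refine assemble fB (fB a₀) (F.filter fun z => z ∈ Γ.right ∧ fB z = true) ?_
        (fun x y => Iff.rfl) ?_
      · intro v hv
        exact ⟨BSide.r, hrX, (Finset.mem_filter.mp hv).2.1⟩
      · intro x hx
        rcases mem_side_total Γ x with h | h
        · have hxr : x ∉ Γ.right := not_right_of_left h
          have hmem : x ∉ F.filter (fun z => z ∈ Γ.right ∧ fB z = true) :=
            fun hm => hxr (Finset.mem_filter.mp hm).2.1
          have : fB x = fB a₀ := hcL x h a₀ ha₀
          simp [hmem, h, this]
        · have hxl : x ∉ Γ.left := fun h' => not_right_of_left h' h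
          by_cases hfx : fB x = true
          · have hmem : x ∈ F.filter (fun z => z ∈ Γ.right ∧ fB z = true) :=
              Finset.mem_filter.mpr ⟨hx, h, hfx⟩
            simp [hmem, hxl, hfx]
          · have hmem : x ∉ F.filter (fun z => z ∈ Γ.right ∧ fB z = true) :=
              fun hm => hfx (Finset.mem_filter.mp hm).2.2
            have hfx' : fB x = false := by
              cases hh : fB x
              · rfl
              · exact absurd hh hfx
            simp [hmem, hxl, hfx']
    · have hcL := hdichL hlX
      have hcR := hdichR hrX
      refine assemble (fun z => xor (fB z) (fB b₀)) (xor (fB a₀) (fB b₀)) ∅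
        (by simp) (fun x y => xor_const_inj) ?_
      intro x hx
      rcases mem_side_total Γ x with h | h
      · have : fB x = fB a₀ := hcL x h a₀ ha₀
        simp [this, h]
      · have hxl : x ∉ Γ.left := fun h' => not_right_of_left h' h
        have : fB x = fB b₀ := hcR x h b₀ hb₀
        simp [this, hxl]
  exact ⟨part1, le_antisymm part1 hX⟩

/-- **Theorem 5.1.** Suppose `G` is a closed subgroup with
`Aut(Γ)* ≤ G ≤ S_{l,r}(Γ)`, and let `X` be the largest subset of `{l, r}` such
that `S_X(Γ)* ⊆ G`.  Then `G ⊆ S_X(Γ)*`, and hence `G = S_X(Γ)*`. -/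
theorem closed_subgroup_of_switchGroup_lr {V : Type*} (Γ : BipartiteGraph V)
    (hΓ : Γ.IsRandom) (G : Subgroup (Equiv.Perm V)) (hG : IsClosedSubgroup G)
    (hAut : ∀ g : Equiv.Perm V, Γ.InAutStar g → g ∈ G)
    (hle : G ≤ Γ.switchGroup {BSide.l, BSide.r})
    (X : Set BSide) (hX : Γ.switchGroupStar X ≤ G)
    (hXmax : ∀ Y : Set BSide, Γ.switchGroupStar Y ≤ G → Y ⊆ X) :
    G ≤ Γ.switchGroupStar X ∧ G = Γ.switchGroupStar X :=
  closed_subgroup_of_switchGroup_lr' Γ hΓ G hG hAut hle X hX hXmax
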